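/- arXiv:2004.11190 — 7 statements merged into one kernel-verified Lean document; each statement's English description precedes it below -/
import Mathlib

section
/- Let Y_1^*, Y_2^*, … be mutually independent real-valued random variables, (r_k)_{k≥1} nonnegative reals, v_k = ∏_{j=1}^{k} 1/(1 + r_j) (v_0 = 1), and S_k^* = Σ_{j=1}^{k} v_{j−1} Y_j^*. Suppose there exist an integer l ≥ 1 and a real q_l > 0 such that for all n ≥ 1 the random variables Y_{n+l}^* and q_l Y_n^* are identically distributed, r_{n+l} = r_n for all n ≥ 1, and q_l v_l ≤ 1. If h ≥ 0 satisfies E[e^{h S_l^*}] ≤ 1, then sup_{k≥1} E[e^{h S_k^*}] ≤ max_{0≤k<l} E[e^{h S_k^*}] (the maximum includes k = 0, for which E[e^{h S_0^*}] = 1), and consequently for every u > 0: P[sup_{k≥1} S_k^* > u] ≤ e^{−hu} · max_{0≤k<l} E[e^{h S_k^*}]. -/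
open MeasureTheory ProbabilityTheory
open scoped ENNReal NNReal

namespace Stmt12Aux

variable {Ω : Type*} [MeasurableSpace Ω] {P : Measure Ω} [IsProbabilityMeasure P]

lemma holder_prob {f : Ω → ℝ≥0∞} (hf : Measurable f) {c : ℝ} (hc0 : 0 ≤ c) (hc1 : c ≤ 1) :
    ∫⁻ ω, f ω ^ c ∂P ≤ (∫⁻ ω, f ω ∂P) ^ c := by
  have h2 : (0 : ℝ) ≤ 1 - c := by linarith
  have h3 := ENNReal.lintegral_mul_norm_pow_le (μ := P) hf.aemeasurable
    (aemeasurable_const (b := (1 : ℝ≥0∞))) hc0 h2 (by ring)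
  simpa using h3

lemma enn_prod_rpow (s : Finset ℕ) (f : ℕ → ℝ≥0∞) {c : ℝ} (hc : 0 ≤ c) :
    ∏ i ∈ s, f i ^ c = (∏ i ∈ s, f i) ^ c := by
  classical
  induction s using Finset.cons_induction with
  | empty => simp
  | cons a s ha ih =>
    rw [Finset.prod_cons, Finset.prod_cons, ih, ENNReal.mul_rpow_of_nonneg _ _ hc]

/-- Functions measurable w.r.t. disjoint blocks of an independent family have
multiplicative lintegrals. -/
lemma block_mul (X : ℕ → Ω → ℝ) (hm : ∀ i, Measurable (X i))
    (hind : iIndepFun X P)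
    {S T : Set ℕ} (hST : Disjoint S T) {F G : Ω → ℝ≥0∞}
    (hF : Measurable[⨆ i ∈ S, MeasurableSpace.comap (X i) inferInstance] F)
    (hG : Measurable[⨆ i ∈ T, MeasurableSpace.comap (X i) inferInstance] G) :
    ∫⁻ ω, F ω * G ω ∂P = (∫⁻ ω, F ω ∂P) * ∫⁻ ω, G ω ∂P := by
  have hle : ∀ i, MeasurableSpace.comap (X i) inferInstance ≤ ‹MeasurableSpace Ω› :=
    fun i => (hm i).comap_le
  exact lintegral_mul_eq_lintegral_mul_lintegral_of_independent_measurableSpace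
    (iSup₂_le fun i _ => hle i) (iSup₂_le fun i _ => hle i)
    (indep_iSup_of_disjoint hle hind.iIndep hST) hF hG

lemma meas_X_block {X : ℕ → Ω → ℝ} {S : Set ℕ} {i : ℕ} (hi : i ∈ S) :
    Measurable[⨆ j ∈ S, MeasurableSpace.comap (X j) inferInstance] (X i) :=
  Measurable.of_comap_le (le_biSup (fun j => MeasurableSpace.comap (X j) inferInstance) hi)

/-- lintegral of a product of compositions with independent coordinates. -/
lemma prod_comp (X : ℕ → Ω → ℝ) (hm : ∀ i, Measurable (X i))
    (hind : iIndepFun X P)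
    (φ : ℕ → ℝ → ℝ≥0∞) (hφ : ∀ i, Measurable (φ i)) (s : Finset ℕ) :
    ∫⁻ ω, ∏ i ∈ s, φ i (X i ω) ∂P = ∏ i ∈ s, ∫⁻ ω, φ i (X i ω) ∂P := by
  classical
  induction s using Finset.induction_on with
  | empty => simp
  | @insert a s ha ih =>
    have hdis : Disjoint ({a} : Set ℕ) (↑s : Set ℕ) := by
      rw [Set.disjoint_singleton_left]
      exact_mod_cast ha
    have hFm : Measurable[⨆ i ∈ ({a} : Set ℕ), MeasurableSpace.comap (X i) inferInstance]
        (fun ω => φ a (X a ω)) :=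
      (hφ a).comp (meas_X_block (by simp))
    have hGm : Measurable[⨆ i ∈ (↑s : Set ℕ), MeasurableSpace.comap (X i) inferInstance]
        (fun ω => ∏ i ∈ s, φ i (X i ω)) := by
      apply Finset.measurable_prod
      intro i hi
      exact (hφ i).comp (meas_X_block (Finset.mem_coe.mpr hi))
    have hsplit : ∫⁻ ω, φ a (X a ω) * ∏ i ∈ s, φ i (X i ω) ∂P
        = (∫⁻ ω, φ a (X a ω) ∂P) * ∫⁻ ω, ∏ i ∈ s, φ i (X i ω) ∂P :=
      block_mul X hm hind hdis hFm hGm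
    simp only [Finset.prod_insert ha]
    rw [hsplit, ih]

lemma lint_exp_sum (X : ℕ → Ω → ℝ) (hm : ∀ i, Measurable (X i))
    (hind : iIndepFun X P) (n : ℕ) :
    ∫⁻ ω, ENNReal.ofReal (Real.exp (∑ i ∈ Finset.range n, X i ω)) ∂P
      = ∏ i ∈ Finset.range n, ∫⁻ ω, ENNReal.ofReal (Real.exp (X i ω)) ∂P := by
  have hpt : ∀ ω, ENNReal.ofReal (Real.exp (∑ i ∈ Finset.range n, X i ω))
      = ∏ i ∈ Finset.range n, ENNReal.ofReal (Real.exp (X i ω)) := by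
    intro ω
    rw [Real.exp_sum, ENNReal.ofReal_prod_of_nonneg (fun i _ => (Real.exp_pos _).le)]
  simp_rw [hpt]
  exact prod_comp X hm hind (fun i x => ENNReal.ofReal (Real.exp x))
    (fun i => Real.measurable_exp.ennreal_ofReal) _

/-- Doob-type maximal inequality for exponentials of partial sums of independent
random variables. -/
lemma doob (X : ℕ → Ω → ℝ) (hm : ∀ i, Measurable (X i))
    (hind : iIndepFun X P) (t : ℝ) (B : ℝ≥0∞)
    (hB : ∀ n, ∫⁻ ω, ENNReal.ofReal (Real.exp (∑ i ∈ Finset.range n, X i ω)) ∂P ≤ B) :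
    P (⋃ k : ℕ, {ω | t < ∑ i ∈ Finset.range (k + 1), X i ω}) ≤
      ENNReal.ofReal (Real.exp (-t)) * B := by
  classical
  rcases eq_or_ne B ⊤ with hBtop | hBtop
  · rw [hBtop, ENNReal.mul_top (by simp [Real.exp_pos])]
    exact le_top
  have hB1 : (1 : ℝ≥0∞) ≤ B := by simpa using hB 0
  have hBne0 : B ≠ 0 := fun h0 => by simp [h0] at hB1
  set g : ℕ → ℝ≥0∞ := fun i => ∫⁻ ω, ENNReal.ofReal (Real.exp (X i ω)) ∂P with hgdef
  have hgm_fun : ∀ i, Measurable fun ω => ENNReal.ofReal (Real.exp (X i ω)) :=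
    fun i => ((hm i).exp).ennreal_ofReal
  have hM : ∀ n, ∫⁻ ω, ENNReal.ofReal (Real.exp (∑ i ∈ Finset.range n, X i ω)) ∂P
      = ∏ i ∈ Finset.range n, g i := fun n => lint_exp_sum X hm hind n
  have hMle : ∀ n, ∏ i ∈ Finset.range n, g i ≤ B := fun n => (hM n) ▸ hB n
  haveI : (MeasureTheory.ae P).NeBot := ae_neBot.2 (IsProbabilityMeasure.ne_zero P)
  have hg0 : ∀ i, g i ≠ 0 := by
    intro i hzero
    rw [hgdef] at hzero
    simp only at hzero
    rw [lintegral_eq_zero_iff (hgm_fun i)] at hzero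
    obtain ⟨ω, hω⟩ := hzero.exists
    have h1 : ENNReal.ofReal (Real.exp (X i ω)) = 0 := hω
    rw [ENNReal.ofReal_eq_zero] at h1
    exact absurd h1 (not_le.mpr (Real.exp_pos _))
  have hgtop : ∀ i, g i ≠ ⊤ := by
    intro i htop
    have hmem : i ∈ Finset.range (i + 1) := by simp
    have h1 : ∏ j ∈ Finset.range (i + 1), g j = ⊤ := by
      rw [← Finset.prod_erase_mul _ _ hmem, htop, ENNReal.mul_top]
      exact Finset.prod_ne_zero_iff.mpr fun j _ => hg0 j
    exact hBtop (top_le_iff.mp (h1 ▸ hMle (i + 1)))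
  set W : ℕ → Ω → ℝ≥0∞ := fun i ω => ENNReal.ofReal (Real.exp (X i ω)) * (g i)⁻¹ with hW
  have hWm : ∀ i, Measurable (W i) := by
    intro i; rw [hW]; exact (hgm_fun i).mul_const _
  have hWint : ∀ i, ∫⁻ ω, W i ω ∂P = 1 := by
    intro i
    simp only [hW]
    rw [lintegral_mul_const' _ _ (ENNReal.inv_ne_top.mpr (hg0 i))]
    show g i * (g i)⁻¹ = 1
    exact ENNReal.mul_inv_cancel (hg0 i) (hgtop i)
  have hprodW : ∀ s : Finset ℕ, ∫⁻ ω, ∏ i ∈ s, W i ω ∂P = ∏ i ∈ s, ∫⁻ ω, W i ω ∂P := by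
    intro s
    have h1 := prod_comp X hm hind (fun i x => ENNReal.ofReal (Real.exp x) * (g i)⁻¹)
      (fun i => (Real.measurable_exp.ennreal_ofReal).mul_const _) s
    simpa only [hW] using h1
  set Z : ℕ → Ω → ℝ≥0∞ := fun n ω => ∏ i ∈ Finset.range n, W i ω with hZ
  have hZm : ∀ n, Measurable (Z n) := by
    intro n; rw [hZ]
    exact Finset.measurable_prod _ fun i _ => hWm i
  have hZint : ∀ n, ∫⁻ ω, Z n ω ∂P = 1 := by
    intro n
    simp only [hZ]
    rw [hprodW]
    exact Finset.prod_eq_one fun i _ => hWint i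
  have hZeq : ∀ n ω, Z n ω
      = ENNReal.ofReal (Real.exp (∑ i ∈ Finset.range n, X i ω))
        * (∏ i ∈ Finset.range n, g i)⁻¹ := by
    intro n ω
    simp only [hZ, hW]
    rw [Finset.prod_mul_distrib]
    congr 1
    · rw [Real.exp_sum, ENNReal.ofReal_prod_of_nonneg (fun i _ => (Real.exp_pos _).le)]
    · exact (ENNReal.prod_inv_distrib (fun i _ j _ _ => Or.inl (hg0 i))).symm
  set A : ℕ → Set Ω := fun k =>
    {ω | t < ∑ i ∈ Finset.range (k + 1), X i ω} ∩
      ⋂ j ∈ Finset.range k, {ω | ∑ i ∈ Finset.range (j + 1), X i ω ≤ t} with hA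
  have hSm : ∀ n, Measurable fun ω => ∑ i ∈ Finset.range n, X i ω :=
    fun n => Finset.measurable_sum _ fun i _ => hm i
  have hAmeas : ∀ k, MeasurableSet (A k) := by
    intro k
    rw [hA]
    refine (measurableSet_lt measurable_const (hSm (k + 1))).inter ?_
    exact MeasurableSet.iInter fun j => MeasurableSet.iInter fun _ =>
      measurableSet_le (hSm (j + 1)) measurable_const
  have hAdisj' : ∀ j k, j < k → Disjoint (A j) (A k) := by
    intro j k hjk
    rw [Set.disjoint_left]
    intro ω hωj hωk
    have h1 : t < ∑ i ∈ Finset.range (j + 1), X i ω := hωj.1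
    have h2 : ∑ i ∈ Finset.range (j + 1), X i ω ≤ t :=
      Set.mem_iInter₂.mp hωk.2 j (Finset.mem_range.mpr hjk)
    linarith
  have hAdisj : Pairwise (Function.onFun Disjoint A) := by
    intro j k hjk
    rcases hjk.lt_or_gt with hlt | hlt
    · exact hAdisj' j k hlt
    · exact (hAdisj' k j hlt).symm
  have hAunion : (⋃ k, A k) = ⋃ k : ℕ, {ω | t < ∑ i ∈ Finset.range (k + 1), X i ω} := by
    apply Set.Subset.antisymm
    · exact Set.iUnion_mono fun k => Set.inter_subset_left
    · intro ω hω
      rw [Set.mem_iUnion] at hω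
      obtain ⟨k, hk⟩ := hω
      have hex : ∃ m, t < ∑ i ∈ Finset.range (m + 1), X i ω := ⟨k, hk⟩
      refine Set.mem_iUnion.mpr ⟨Nat.find hex, ?_⟩
      rw [hA]
      refine ⟨Nat.find_spec hex, Set.mem_iInter₂.mpr fun j hj => ?_⟩
      exact not_lt.mp (Nat.find_min hex (Finset.mem_range.mp hj))
  set c : ℝ≥0∞ := ENNReal.ofReal (Real.exp t) * B⁻¹ with hc
  have hc0 : c ≠ 0 := by
    rw [hc]
    exact mul_ne_zero (by simp [Real.exp_pos]) (ENNReal.inv_ne_zero.mpr hBtop)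
  have hctop : c ≠ ⊤ := by
    rw [hc]
    exact ENNReal.mul_ne_top ENNReal.ofReal_ne_top (ENNReal.inv_ne_top.mpr hBne0)
  -- key estimate
  have key : ∀ n k, k < n → c * P (A k) ≤ ∫⁻ ω, (A k).indicator (Z n) ω ∂P := by
    intro n k hkn
    have hsplitfun : ∀ ω, (A k).indicator (Z n) ω
        = (A k).indicator (Z (k + 1)) ω * ∏ i ∈ Finset.Ico (k + 1) n, W i ω := by
      intro ω
      by_cases hω : ω ∈ A k
      · rw [Set.indicator_of_mem hω, Set.indicator_of_mem hω]
        simp only [hZ]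
        rw [Finset.range_eq_Ico, Finset.range_eq_Ico,
          ← Finset.prod_Ico_consecutive (fun i => W i ω) (Nat.zero_le (k + 1)) hkn]
      · rw [Set.indicator_of_notMem hω, Set.indicator_of_notMem hω, zero_mul]
    have hdis : Disjoint (↑(Finset.range (k + 1)) : Set ℕ) (↑(Finset.Ico (k + 1) n) : Set ℕ) := by
      simp only [Finset.coe_range, Finset.coe_Ico]
      rw [Set.disjoint_left]
      intro x hx hx2
      exact absurd hx2.1 (not_le.mpr hx)
    -- measurability of the first block
    have hXm' : ∀ i, i < k + 1 →
        Measurable[⨆ j ∈ (↑(Finset.range (k + 1)) : Set ℕ),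
          MeasurableSpace.comap (X j) inferInstance] (X i) := by
      intro i hi
      exact meas_X_block (by simpa using hi)
    have hSm' : ∀ j, j ≤ k + 1 →
        Measurable[⨆ i ∈ (↑(Finset.range (k + 1)) : Set ℕ),
          MeasurableSpace.comap (X i) inferInstance]
          (fun ω => ∑ i ∈ Finset.range j, X i ω) := by
      intro j hj
      exact Finset.measurable_sum _ fun i hi =>
        hXm' i (lt_of_lt_of_le (Finset.mem_range.mp hi) hj)
    have hZm' : Measurable[⨆ i ∈ (↑(Finset.range (k + 1)) : Set ℕ),
        MeasurableSpace.comap (X i) inferInstance] (Z (k + 1)) := by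
      rw [hZ]
      apply Finset.measurable_prod
      intro i hi
      rw [hW]
      exact (((hXm' i (Finset.mem_range.mp hi)).exp).ennreal_ofReal).mul_const _
    have hAm' : MeasurableSet[⨆ i ∈ (↑(Finset.range (k + 1)) : Set ℕ),
        MeasurableSpace.comap (X i) inferInstance] (A k) := by
      rw [hA]
      refine MeasurableSet.inter ?_ ?_
      · exact measurableSet_lt measurable_const (hSm' (k + 1) le_rfl)
      · exact MeasurableSet.iInter fun j => MeasurableSet.iInter fun hj =>
          measurableSet_le (hSm' (j + 1) (by
            have := Finset.mem_range.mp hj; omega)) measurable_const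
    have hFmeas : Measurable[⨆ i ∈ (↑(Finset.range (k + 1)) : Set ℕ),
        MeasurableSpace.comap (X i) inferInstance] ((A k).indicator (Z (k + 1))) :=
      hZm'.indicator hAm'
    have hGmeas : Measurable[⨆ i ∈ (↑(Finset.Ico (k + 1) n) : Set ℕ),
        MeasurableSpace.comap (X i) inferInstance]
        (fun ω => ∏ i ∈ Finset.Ico (k + 1) n, W i ω) := by
      apply Finset.measurable_prod
      intro i hi
      rw [hW]
      exact (((meas_X_block (X := X) (Finset.mem_coe.mpr hi)).exp).ennreal_ofReal).mul_const _
    have hIcoint : ∫⁻ ω, ∏ i ∈ Finset.Ico (k + 1) n, W i ω ∂P = 1 := by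
      rw [hprodW]
      exact Finset.prod_eq_one fun i _ => hWint i
    have hstep : ∫⁻ ω, (A k).indicator (Z n) ω ∂P
        = ∫⁻ ω, (A k).indicator (Z (k + 1)) ω ∂P := by
      calc ∫⁻ ω, (A k).indicator (Z n) ω ∂P
          = ∫⁻ ω, (A k).indicator (Z (k + 1)) ω * ∏ i ∈ Finset.Ico (k + 1) n, W i ω ∂P :=
            lintegral_congr hsplitfun
        _ = (∫⁻ ω, (A k).indicator (Z (k + 1)) ω ∂P)
              * ∫⁻ ω, ∏ i ∈ Finset.Ico (k + 1) n, W i ω ∂P :=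
            block_mul X hm hind hdis hFmeas hGmeas
        _ = ∫⁻ ω, (A k).indicator (Z (k + 1)) ω ∂P := by rw [hIcoint, mul_one]
    have hlow : c * P (A k) ≤ ∫⁻ ω, (A k).indicator (Z (k + 1)) ω ∂P := by
      have hpt : ∀ ω, (A k).indicator (fun _ => c) ω ≤ (A k).indicator (Z (k + 1)) ω := by
        intro ω
        by_cases hω : ω ∈ A k
        · rw [Set.indicator_of_mem hω, Set.indicator_of_mem hω, hZeq, hc]
          have h1 : ENNReal.ofReal (Real.exp t)
              ≤ ENNReal.ofReal (Real.exp (∑ i ∈ Finset.range (k + 1), X i ω)) :=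
            ENNReal.ofReal_le_ofReal (Real.exp_le_exp.mpr (le_of_lt hω.1))
          have h2 : B⁻¹ ≤ (∏ i ∈ Finset.range (k + 1), g i)⁻¹ :=
            ENNReal.inv_le_inv' (hMle (k + 1))
          exact mul_le_mul' h1 h2
        · rw [Set.indicator_of_notMem hω, Set.indicator_of_notMem hω]
      calc c * P (A k) = ∫⁻ ω, (A k).indicator (fun _ => c) ω ∂P := by
            rw [lintegral_indicator_const (hAmeas k)]
        _ ≤ _ := lintegral_mono hpt
    rw [hstep]
    exact hlow
  -- summation
  have hsum : ∀ n, ∑ k ∈ Finset.range n, P (A k) ≤ ENNReal.ofReal (Real.exp (-t)) * B := by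
    intro n
    have h1 : ∀ k ∈ Finset.range n,
        P (A k) ≤ c⁻¹ * ∫⁻ ω, (A k).indicator (Z n) ω ∂P := by
      intro k hk
      have h2 := key n k (Finset.mem_range.mp hk)
      have h3 := mul_le_mul_right h2 c⁻¹
      rwa [← mul_assoc, ENNReal.inv_mul_cancel hc0 hctop, one_mul] at h3
    have hcinv : c⁻¹ = ENNReal.ofReal (Real.exp (-t)) * B := by
      rw [hc, ENNReal.mul_inv (Or.inl (by simp [Real.exp_pos])) (Or.inl ENNReal.ofReal_ne_top),
        inv_inv, ← ENNReal.ofReal_inv_of_pos (Real.exp_pos t), ← Real.exp_neg]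
    calc ∑ k ∈ Finset.range n, P (A k)
        ≤ ∑ k ∈ Finset.range n, c⁻¹ * ∫⁻ ω, (A k).indicator (Z n) ω ∂P :=
          Finset.sum_le_sum h1
      _ = c⁻¹ * ∫⁻ ω, ∑ k ∈ Finset.range n, (A k).indicator (Z n) ω ∂P := by
          rw [← Finset.mul_sum, lintegral_finset_sum _ fun k _ => (hZm n).indicator (hAmeas k)]
      _ ≤ c⁻¹ * ∫⁻ ω, Z n ω ∂P := by
          refine mul_le_mul_right (lintegral_mono fun ω => ?_) c⁻¹
          by_cases hex : ∃ k₀ ∈ Finset.range n, ω ∈ A k₀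
          · obtain ⟨k₀, hk₀, hωk₀⟩ := hex
            rw [Finset.sum_eq_single_of_mem k₀ hk₀ (fun b _ hbne =>
              Set.indicator_of_notMem
                (fun hωb => Set.disjoint_left.mp (hAdisj hbne) hωb hωk₀) _)]
            rw [Set.indicator_of_mem hωk₀]
          · rw [Finset.sum_eq_zero fun k hk =>
              Set.indicator_of_notMem (fun hωk => hex ⟨k, hk, hωk⟩) _]
            exact zero_le
      _ = c⁻¹ := by rw [hZint n, mul_one]
      _ = ENNReal.ofReal (Real.exp (-t)) * B := hcinv
  rw [← hAunion, measure_iUnion hAdisj hAmeas, ENNReal.tsum_eq_iSup_nat]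
  exact iSup_le hsum

end Stmt12Aux

open Stmt12Aux

/-- Theorem 3, quasi-periodic model, case `q_l v_l ≤ 1`.
Random variables are 1-indexed (index `0` unused): `v k = ∏_{j=1}^{k} 1/(1+r_j)`
(so `v 0 = 1`) and `S*_k = ∑_{j=1}^{k} v_{j-1} Y*_j` (so `S*_0 = 0`).
Assume `l ≥ 1`, `q_l > 0`, `Y*_{n+l}` is distributed as `q_l Y*_n` and `r_{n+l} = r_n`
for all `n ≥ 1`, and `q_l v_l ≤ 1`.  If `h ≥ 0` satisfies `E[e^{h S*_l}] ≤ 1`, then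
`sup_{k≥1} E[e^{h S*_k}] ≤ max_{0 ≤ k < l} E[e^{h S*_k}]` (the max includes `k = 0`,
where `E[e^{h S*_0}] = 1`), and for every `u > 0`:
`P[sup_{k≥1} S*_k > u] ≤ e^{-h u} · max_{0 ≤ k < l} E[e^{h S*_k}]`. -/
theorem stmt12 {Ω : Type*} [MeasurableSpace Ω] (P : Measure Ω) [IsProbabilityMeasure P]
    (Ystar : ℕ → Ω → ℝ)
    (hmeas : ∀ i, Measurable (Ystar i))
    (hindep : iIndepFun (fun k : ℕ => Ystar (k + 1)) P)
    (r : ℕ → ℝ) (hr : ∀ k : ℕ, 1 ≤ k → 0 ≤ r k)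
    (v : ℕ → ℝ) (hv : ∀ k, v k = ∏ j ∈ Finset.Icc 1 k, (1 + r j)⁻¹)
    (Sstar : ℕ → Ω → ℝ)
    (hSstar : ∀ k ω, Sstar k ω = ∑ j ∈ Finset.Icc 1 k, v (j - 1) * Ystar j ω)
    (l : ℕ) (hl : 1 ≤ l) (q : ℝ) (hq : 0 < q)
    (hper : ∀ n : ℕ, 1 ≤ n →
      Measure.map (Ystar (n + l)) P = Measure.map (fun ω => q * Ystar n ω) P)
    (hrper : ∀ n : ℕ, 1 ≤ n → r (n + l) = r n)
    (hqv : q * v l ≤ 1)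
    (h : ℝ) (hh : 0 ≤ h)
    (hSl : ∫⁻ ω, ENNReal.ofReal (Real.exp (h * Sstar l ω)) ∂P ≤ 1) :
    (⨆ k : ℕ, ∫⁻ ω, ENNReal.ofReal (Real.exp (h * Sstar (k + 1) ω)) ∂P) ≤
      (⨆ k ∈ Finset.range l, ∫⁻ ω, ENNReal.ofReal (Real.exp (h * Sstar k ω)) ∂P) ∧
    ∀ u : ℝ, 0 < u →
      P (⋃ k : ℕ, {ω | u < Sstar (k + 1) ω}) ≤
        ENNReal.ofReal (Real.exp (-h * u)) *
          ⨆ k ∈ Finset.range l, ∫⁻ ω, ENNReal.ofReal (Real.exp (h * Sstar k ω)) ∂P := by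
  classical
  -- the weighted summands
  set X : ℕ → Ω → ℝ := fun i => (fun x => h * (v i * x)) ∘ Ystar (i + 1) with hX
  have hXm : ∀ i, Measurable (X i) := by
    intro i
    rw [hX]
    exact ((measurable_id.const_mul (v i)).const_mul h).comp (hmeas (i + 1))
  have hXind : iIndepFun X P := by
    rw [hX]
    exact hindep.comp _ fun i => (measurable_id.const_mul (v i)).const_mul h
  have hS : ∀ n ω, h * Sstar n ω = ∑ i ∈ Finset.range n, X i ω := by
    intro n ω
    rw [hSstar n ω, Finset.mul_sum, ← Finset.Ico_add_one_right_eq_Icc, Finset.sum_Ico_eq_sum_range]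
    refine Finset.sum_congr (by simp) fun i _ => ?_
    rw [hX]
    simp only [Function.comp_apply, Nat.add_comm 1 i, Nat.add_sub_cancel]
  set M : ℕ → ℝ≥0∞ := fun n => ∫⁻ ω, ENNReal.ofReal (Real.exp (h * Sstar n ω)) ∂P with hMdef
  have hMk : ∀ k, (∫⁻ ω, ENNReal.ofReal (Real.exp (h * Sstar k ω)) ∂P) = M k :=
    fun k => by rw [hMdef]
  set g : ℕ → ℝ≥0∞ := fun i => ∫⁻ ω, ENNReal.ofReal (Real.exp (X i ω)) ∂P with hgdef
  have hMprod : ∀ n, M n = ∏ i ∈ Finset.range n, g i := by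
    intro n
    rw [hMdef, hgdef]
    simp only
    simp_rw [hS]
    exact lint_exp_sum X hXm hXind n
  -- basic facts on v
  have hvpos : ∀ k, 0 < v k := by
    intro k
    rw [hv]
    refine Finset.prod_pos fun j hj => ?_
    have h1 : 1 ≤ j := (Finset.mem_Icc.mp hj).1
    have h2 := hr j h1
    positivity
  have hc0 : (0 : ℝ) < q * v l := mul_pos hq (hvpos l)
  have hvper : ∀ i, v (l + i) = v l * v i := by
    intro i
    rw [hv, hv, hv, ← Finset.Ico_add_one_right_eq_Icc, ← Finset.Ico_add_one_right_eq_Icc, ← Finset.Ico_add_one_right_eq_Icc,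
      ← Finset.prod_Ico_consecutive (fun j => (1 + r j)⁻¹)
        (by omega : 1 ≤ l + 1) (by omega : l + 1 ≤ l + i + 1)]
    congr 1
    rw [Finset.prod_Ico_eq_prod_range, Finset.prod_Ico_eq_prod_range]
    refine Finset.prod_congr (by congr 1; omega) fun j _ => ?_
    congr 2
    rw [show l + 1 + j = (1 + j) + l by omega, hrper (1 + j) (by omega)]
  -- the per-coordinate comparison coming from the quasi-periodicity
  have hgper : ∀ i, g (l + i) ≤ g i ^ (q * v l) := by
    intro i
    have hφm : Measurable fun x : ℝ => ENNReal.ofReal (Real.exp (h * (v (l + i) * x))) :=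
      (((measurable_id.const_mul (v (l + i))).const_mul h).exp).ennreal_ofReal
    have hidx : l + i + 1 = (i + 1) + l := by omega
    have htrans : g (l + i)
        = ∫⁻ ω, ENNReal.ofReal (Real.exp (h * (v (l + i) * (q * Ystar (i + 1) ω)))) ∂P := by
      rw [hgdef]
      simp only
      rw [hX]
      simp only [Function.comp_apply]
      calc ∫⁻ ω, ENNReal.ofReal (Real.exp (h * (v (l + i) * Ystar (l + i + 1) ω))) ∂P
          = ∫⁻ x, ENNReal.ofReal (Real.exp (h * (v (l + i) * x)))
              ∂(Measure.map (Ystar ((i + 1) + l)) P) := by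
            rw [lintegral_map hφm (hmeas _), hidx]
        _ = ∫⁻ x, ENNReal.ofReal (Real.exp (h * (v (l + i) * x)))
              ∂(Measure.map (fun ω => q * Ystar (i + 1) ω) P) := by
            rw [hper (i + 1) (by omega)]
        _ = _ := lintegral_map hφm (measurable_const.mul (hmeas (i + 1)))
    have hpt : ∀ ω, ENNReal.ofReal (Real.exp (h * (v (l + i) * (q * Ystar (i + 1) ω))))
        = ENNReal.ofReal (Real.exp (X i ω)) ^ (q * v l) := by
      intro ω
      rw [hX]
      simp only [Function.comp_apply]
      rw [show h * (v (l + i) * (q * Ystar (i + 1) ω))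
          = (h * (v i * Ystar (i + 1) ω)) * (q * v l) by rw [hvper]; ring]
      rw [Real.exp_mul, ← ENNReal.ofReal_rpow_of_pos (Real.exp_pos _)]
    calc g (l + i) = ∫⁻ ω, ENNReal.ofReal (Real.exp (X i ω)) ^ (q * v l) ∂P := by
          rw [htrans]; exact lintegral_congr hpt
      _ ≤ (∫⁻ ω, ENNReal.ofReal (Real.exp (X i ω)) ∂P) ^ (q * v l) :=
          holder_prob (((hXm i).exp).ennreal_ofReal) hc0.le hqv
      _ = g i ^ (q * v l) := by rw [hgdef]
  -- the recursion
  have hMl1 : M l ≤ 1 := by rw [← hMk l]; exact hSl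
  have hrec : ∀ k, M (l + k) ≤ M k ^ (q * v l) := by
    intro k
    rw [hMprod, hMprod, Finset.prod_range_add]
    have h1 : ∏ i ∈ Finset.range l, g i ≤ 1 := by rw [← hMprod l]; exact hMl1
    have h2 : ∏ i ∈ Finset.range k, g (l + i) ≤ (∏ i ∈ Finset.range k, g i) ^ (q * v l) := by
      calc ∏ i ∈ Finset.range k, g (l + i) ≤ ∏ i ∈ Finset.range k, g i ^ (q * v l) :=
            Finset.prod_le_prod' fun i _ => hgper i
        _ = (∏ i ∈ Finset.range k, g i) ^ (q * v l) := enn_prod_rpow _ _ hc0.le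
    calc (∏ i ∈ Finset.range l, g i) * ∏ i ∈ Finset.range k, g (l + i)
        ≤ 1 * (∏ i ∈ Finset.range k, g i) ^ (q * v l) := mul_le_mul' h1 h2
      _ = (∏ i ∈ Finset.range k, g i) ^ (q * v l) := one_mul _
  -- the bound B
  simp only [hMk]
  set B : ℝ≥0∞ := ⨆ k ∈ Finset.range l, M k with hBdef
  have hM0 : M 0 = 1 := by
    rw [hMdef]
    simp only
    have h0 : ∀ ω, Sstar 0 ω = 0 := fun ω => by rw [hSstar]; simp
    simp [h0]
  have hB1 : (1 : ℝ≥0∞) ≤ B := by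
    rw [hBdef, ← hM0]
    exact le_biSup M (Finset.mem_range.mpr (by omega))
  have hMB : ∀ k, M k ≤ B := by
    intro k
    induction k using Nat.strong_induction_on with
    | _ k ih =>
      by_cases hkl : k < l
      · rw [hBdef]
        exact le_biSup M (Finset.mem_range.mpr hkl)
      · push_neg at hkl
        obtain ⟨m, rfl⟩ : ∃ m, k = l + m := ⟨k - l, by omega⟩
        have hm : m < l + m := by omega
        refine (hrec m).trans ?_
        rcases le_total (M m) 1 with hle | hle
        · exact le_trans (ENNReal.rpow_le_one hle hc0.le) hB1
        · refine le_trans (le_trans (ENNReal.rpow_le_rpow_of_exponent_le hle hqv) ?_) (ih m hm)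
          rw [ENNReal.rpow_one]
  constructor
  · exact iSup_le fun k => hMB (k + 1)
  · intro u hu
    rcases eq_or_lt_of_le hh with hh0 | hh0
    · have hone : ENNReal.ofReal (Real.exp (-h * u)) = 1 := by
        rw [← hh0]
        norm_num
      rw [hone, one_mul]
      exact le_trans prob_le_one hB1
    · have hd := doob (P := P) X hXm hXind (h * u) B (fun n => by
        simp_rw [← hS]
        rw [hMk n]
        exact hMB n)
      have hev : (⋃ k : ℕ, {ω | u < Sstar (k + 1) ω})
          = ⋃ k : ℕ, {ω | h * u < ∑ i ∈ Finset.range (k + 1), X i ω} := by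
        refine Set.iUnion_congr fun k => ?_
        ext ω
        simp only [Set.mem_setOf_eq, ← hS]
        exact (mul_lt_mul_iff_right₀ hh0).symm
      rw [hev]
      refine hd.trans (le_of_eq ?_)
      rw [neg_mul]
end

section
/- Let Y_1^*, Y_2^*, … be mutually independent real-valued random variables, (r_k)_{k≥1} nonnegative reals, v_k = ∏_{j=1}^{k} 1/(1 + r_j) (v_0 = 1), and S_k^* = Σ_{j=1}^{k} v_{j−1} Y_j^*. Suppose there exist an integer l ≥ 1 and a real q_l > 0 such that for all n ≥ 1 the random variables Y_{n+l}^* and q_l Y_n^* are identically distributed, r_{n+l} = r_n for all n ≥ 1, and q_l v_l = 1. If h ≥ 0 satisfies E[e^{h S_l^*}] ≤ 1, then sup_{k≥1} E[e^{h S_k^*}] = max_{1≤k≤l} E[e^{h S_k^*}]. -/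
open MeasureTheory ProbabilityTheory
open scoped ENNReal

private lemma icc_sum_eq_range_sum {Ω : Type*} (c : ℕ → ℝ) (Y : ℕ → Ω → ℝ) (n : ℕ) (ω : Ω) :
    ∑ j ∈ Finset.Icc 1 n, c j * Y j ω = ∑ k ∈ Finset.range n, c (k + 1) * Y (k + 1) ω := by
  induction n with
  | zero => simp
  | succ n ih =>
      rw [Finset.sum_Icc_succ_top (Nat.le_add_left 1 n), Finset.sum_range_succ, ih]

/-- Factorization of the Laplace functional of a weighted sum of independent random
variables. -/
private lemma factor_lemma {Ω : Type*} [MeasurableSpace Ω] (P : Measure Ω)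
    [IsProbabilityMeasure P] (Ystar : ℕ → Ω → ℝ) (hmeas : ∀ i, Measurable (Ystar i))
    (hindep : iIndepFun (fun k : ℕ => Ystar (k + 1)) P)
    (c : ℕ → ℝ) (n : ℕ) :
    ∫⁻ ω, ENNReal.ofReal (Real.exp (∑ j ∈ Finset.Icc 1 n, c j * Ystar j ω)) ∂P
      = ∏ j ∈ Finset.Icc 1 n, ∫⁻ ω, ENNReal.ofReal (Real.exp (c j * Ystar j ω)) ∂P := by
  induction n with
  | zero => simp
  | succ n ih =>
      have hFmeas : Measurable fun ω =>
          ENNReal.ofReal (Real.exp (∑ j ∈ Finset.Icc 1 n, c j * Ystar j ω)) := by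
        exact ENNReal.measurable_ofReal.comp (Real.measurable_exp.comp
          (Finset.measurable_sum _ fun j _ => (hmeas j).const_mul (c j)))
      have hGmeas : Measurable fun ω =>
          ENNReal.ofReal (Real.exp (c (n + 1) * Ystar (n + 1) ω)) := by
        exact ENNReal.measurable_ofReal.comp (Real.measurable_exp.comp
          ((hmeas (n + 1)).const_mul (c (n + 1))))
      have hW : iIndepFun
          (fun k : ℕ => fun ω => c (k + 1) * Ystar (k + 1) ω) P :=
        hindep.comp (fun k (x : ℝ) => c (k + 1) * x) fun k => measurable_const_mul _
      have hWmeas : ∀ k : ℕ, Measurable fun ω => c (k + 1) * Ystar (k + 1) ω :=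
        fun k => (hmeas (k + 1)).const_mul _
      have h1 : IndepFun (∑ j ∈ Finset.range n, fun ω => c (j + 1) * Ystar (j + 1) ω)
          (fun ω => c (n + 1) * Ystar (n + 1) ω) P :=
        hW.indepFun_sum_range_succ hWmeas n
      have h2 : (∑ j ∈ Finset.range n, fun ω => c (j + 1) * Ystar (j + 1) ω)
          = fun ω => ∑ j ∈ Finset.Icc 1 n, c j * Ystar j ω := by
        funext ω
        rw [Finset.sum_apply, icc_sum_eq_range_sum]
      rw [h2] at h1
      have hindep2 : IndepFun
          (fun ω => ENNReal.ofReal (Real.exp (∑ j ∈ Finset.Icc 1 n, c j * Ystar j ω)))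
          (fun ω => ENNReal.ofReal (Real.exp (c (n + 1) * Ystar (n + 1) ω))) P :=
        h1.comp (ENNReal.measurable_ofReal.comp Real.measurable_exp)
          (ENNReal.measurable_ofReal.comp Real.measurable_exp)
      have hsplit : ∫⁻ ω, ENNReal.ofReal
            (Real.exp (∑ j ∈ Finset.Icc 1 (n + 1), c j * Ystar j ω)) ∂P
          = ∫⁻ ω, ENNReal.ofReal (Real.exp (∑ j ∈ Finset.Icc 1 n, c j * Ystar j ω))
              * ENNReal.ofReal (Real.exp (c (n + 1) * Ystar (n + 1) ω)) ∂P := by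
        apply lintegral_congr
        intro ω
        rw [Finset.sum_Icc_succ_top (Nat.le_add_left 1 n), Real.exp_add,
          ENNReal.ofReal_mul (Real.exp_nonneg _)]
      rw [hsplit,
        lintegral_mul_eq_lintegral_mul_lintegral_of_indepFun'' hFmeas.aemeasurable
          hGmeas.aemeasurable hindep2,
        ih, Finset.prod_Icc_succ_top (Nat.le_add_left 1 n)]

/-- Theorem 3, periodic case `q_l v_l = 1`.
Random variables are 1-indexed (index `0` unused): `v k = ∏_{j=1}^{k} 1/(1+r_j)`
(so `v 0 = 1`) and `S*_k = ∑_{j=1}^{k} v_{j-1} Y*_j` (so `S*_0 = 0`).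
Assume `l ≥ 1`, `q_l > 0`, `Y*_{n+l}` is distributed as `q_l Y*_n` and `r_{n+l} = r_n`
for all `n ≥ 1`, and `q_l v_l = 1`.  If `h ≥ 0` satisfies `E[e^{h S*_l}] ≤ 1`, then
`sup_{k≥1} E[e^{h S*_k}] = max_{1 ≤ k ≤ l} E[e^{h S*_k}]`. -/
theorem stmt13 {Ω : Type*} [MeasurableSpace Ω] (P : Measure Ω) [IsProbabilityMeasure P]
    (Ystar : ℕ → Ω → ℝ)
    (hmeas : ∀ i, Measurable (Ystar i))
    (hindep : iIndepFun (fun k : ℕ => Ystar (k + 1)) P)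
    (r : ℕ → ℝ) (hr : ∀ k : ℕ, 1 ≤ k → 0 ≤ r k)
    (v : ℕ → ℝ) (hv : ∀ k, v k = ∏ j ∈ Finset.Icc 1 k, (1 + r j)⁻¹)
    (Sstar : ℕ → Ω → ℝ)
    (hSstar : ∀ k ω, Sstar k ω = ∑ j ∈ Finset.Icc 1 k, v (j - 1) * Ystar j ω)
    (l : ℕ) (hl : 1 ≤ l) (q : ℝ) (hq : 0 < q)
    (hper : ∀ n : ℕ, 1 ≤ n →
      Measure.map (Ystar (n + l)) P = Measure.map (fun ω => q * Ystar n ω) P)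
    (hrper : ∀ n : ℕ, 1 ≤ n → r (n + l) = r n)
    (hqv : q * v l = 1)
    (h : ℝ) (hh : 0 ≤ h)
    (hSl : ∫⁻ ω, ENNReal.ofReal (Real.exp (h * Sstar l ω)) ∂P ≤ 1) :
    (⨆ k : ℕ, ∫⁻ ω, ENNReal.ofReal (Real.exp (h * Sstar (k + 1) ω)) ∂P) =
      ⨆ k ∈ Finset.Icc 1 l, ∫⁻ ω, ENNReal.ofReal (Real.exp (h * Sstar k ω)) ∂P := by
  classical
  -- Notation
  set Φ : ℕ → ℝ≥0∞ := fun k => ∫⁻ ω, ENNReal.ofReal (Real.exp (h * Sstar k ω)) ∂P with hΦ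
  set c : ℕ → ℝ := fun j => h * v (j - 1) with hc
  set I : ℕ → ℝ≥0∞ := fun j => ∫⁻ ω, ENNReal.ofReal (Real.exp (c j * Ystar j ω)) ∂P with hI
  -- basic facts about v
  have hv0 : v 0 = 1 := by rw [hv]; simp
  have vstep : ∀ n : ℕ, v (n + 1) = v n * (1 + r (n + 1))⁻¹ := by
    intro n
    rw [hv, hv, Finset.prod_Icc_succ_top (Nat.le_add_left 1 n)]
  have vmul : ∀ m : ℕ, v (l + m) = v l * v m := by
    intro m
    induction m with
    | zero => simp [hv0]
    | succ m ih =>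
        have e : l + (m + 1) = (l + m) + 1 := by omega
        rw [e, vstep (l + m), ih, show l + m + 1 = (m + 1) + l from by omega,
          hrper (m + 1) (Nat.le_add_left 1 m), vstep m, mul_assoc]
  -- Φ in product form
  have hphi : ∀ k : ℕ, Φ k = ∏ j ∈ Finset.Icc 1 k, I j := by
    intro k
    rw [hΦ, hI]
    rw [← factor_lemma P Ystar hmeas hindep c k]
    apply lintegral_congr
    intro ω
    rw [hSstar, Finset.mul_sum]
    congr 2
    refine Finset.sum_congr rfl fun j _ => ?_
    rw [hc, mul_assoc]
  -- per-factor periodicity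
  have hIper : ∀ m : ℕ, I (m + 1 + l) = I (m + 1) := by
    intro m
    have hgmeas : Measurable fun x : ℝ => ENNReal.ofReal (Real.exp (c (m + 1 + l) * x)) :=
      ENNReal.measurable_ofReal.comp (Real.measurable_exp.comp (measurable_const_mul _))
    have hcq : c (m + 1 + l) * q = c (m + 1) := by
      rw [hc]
      simp only [show m + 1 + l - 1 = l + m from by omega, show m + 1 - 1 = m from rfl]
      rw [vmul m]
      linear_combination (h * v m) * hqv
    calc I (m + 1 + l)
        = ∫⁻ x, ENNReal.ofReal (Real.exp (c (m + 1 + l) * x))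
            ∂(Measure.map (Ystar (m + 1 + l)) P) :=
          (lintegral_map hgmeas (hmeas _)).symm
      _ = ∫⁻ x, ENNReal.ofReal (Real.exp (c (m + 1 + l) * x))
            ∂(Measure.map (fun ω => q * Ystar (m + 1) ω) P) := by
          rw [hper (m + 1) (Nat.le_add_left 1 m)]
      _ = ∫⁻ ω, ENNReal.ofReal (Real.exp (c (m + 1 + l) * (q * Ystar (m + 1) ω))) ∂P :=
          lintegral_map hgmeas ((hmeas (m + 1)).const_mul q)
      _ = I (m + 1) := by
          rw [hI]
          apply lintegral_congr
          intro ω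
          rw [← mul_assoc, hcq]
  -- multiplicativity of Φ along periods
  have hJ : ∀ n : ℕ, (∏ j ∈ Finset.Icc 1 (n + l), I j)
      = (∏ j ∈ Finset.Icc 1 l, I j) * ∏ j ∈ Finset.Icc 1 n, I j := by
    intro n
    induction n with
    | zero => simp
    | succ n ih =>
        rw [show n + 1 + l = (n + l) + 1 from by omega,
          Finset.prod_Icc_succ_top (by omega : 1 ≤ n + l + 1), ih,
          show n + l + 1 = n + 1 + l from by omega, hIper n,
          Finset.prod_Icc_succ_top (Nat.le_add_left 1 n), mul_assoc]
  have hmul : ∀ n : ℕ, Φ (n + l) = Φ l * Φ n := by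
    intro n
    rw [hphi, hphi, hphi, hJ]
  have hPl : Φ l ≤ 1 := hSl
  have hstep : ∀ n : ℕ, Φ (n + l) ≤ Φ n := by
    intro n
    calc Φ (n + l) = Φ l * Φ n := hmul n
      _ ≤ 1 * Φ n := mul_le_mul_left hPl _
      _ = Φ n := one_mul _
  set M : ℝ≥0∞ := ⨆ k ∈ Finset.Icc 1 l, Φ k with hM
  have bound : ∀ k : ℕ, 1 ≤ k → Φ k ≤ M := by
    intro k
    induction k using Nat.strong_induction_on with
    | _ k ih =>
        intro hk1
        by_cases hkl : k ≤ l
        · exact le_iSup₂ (f := fun k _ => Φ k) k (Finset.mem_Icc.mpr ⟨hk1, hkl⟩)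
        · have hk : k = (k - l) + l := by omega
          have h1 : Φ k ≤ Φ (k - l) := by
            calc Φ k = Φ ((k - l) + l) := by rw [← hk]
              _ ≤ Φ (k - l) := hstep (k - l)
          exact h1.trans (ih (k - l) (by omega) (by omega))
  apply le_antisymm
  · exact iSup_le fun k => bound (k + 1) (Nat.le_add_left 1 k)
  · refine iSup₂_le fun k hk => ?_
    have hk1 : 1 ≤ k := (Finset.mem_Icc.mp hk).1
    have : Φ k = Φ ((k - 1) + 1) := by rw [show k - 1 + 1 = k from by omega]
    rw [this]
    exact le_iSup (fun k => Φ (k + 1)) (k - 1)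
end

section
/- Let Y_1^*, Y_2^*, … be mutually independent real-valued random variables, (r_k)_{k≥1} nonnegative reals, v_k = ∏_{j=1}^{k} 1/(1 + r_j) (v_0 = 1), and S_k^* = Σ_{j=1}^{k} v_{j−1} Y_j^*. Suppose there exist an integer l ≥ 1 and a real q_l > 0 such that for all n ≥ 1 the random variables Y_{n+l}^* and q_l Y_n^* are identically distributed, and r_{n+l} = r_n for all n ≥ 1. Then for every i ≥ 0 and every k ≥ 1, the random variable Δ_{i,k} := S_{il+k}^* − S_{il}^* is identically distributed with (q_l v_l)^i · S_k^*. -/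
open MeasureTheory ProbabilityTheory

/-- If `X ⊥ Y`, `X' ⊥ Y'`, `X` has the law of `X'` and `Y` that of `Y'`, then
`X + Y` has the law of `X' + Y'`. -/
lemma stmt14_map_add_eq {Ω : Type*} [MeasurableSpace Ω] (P : Measure Ω) [IsProbabilityMeasure P]
    {X Y X' Y' : Ω → ℝ} (hX : Measurable X) (hY : Measurable Y) (hX' : Measurable X')
    (hY' : Measurable Y') (hind : IndepFun X Y P) (hind' : IndepFun X' Y' P)
    (h1 : P.map X = P.map X') (h2 : P.map Y = P.map Y') :
    P.map (fun ω => X ω + Y ω) = P.map (fun ω => X' ω + Y' ω) := by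
  have e1 : P.map (fun ω => (X ω, Y ω)) = (P.map X).prod (P.map Y) :=
    (indepFun_iff_map_prod_eq_prod_map_map hX.aemeasurable hY.aemeasurable).1 hind
  have e2 : P.map (fun ω => (X' ω, Y' ω)) = (P.map X').prod (P.map Y') :=
    (indepFun_iff_map_prod_eq_prod_map_map hX'.aemeasurable hY'.aemeasurable).1 hind'
  calc P.map (fun ω => X ω + Y ω)
      = (P.map (fun ω => (X ω, Y ω))).map (fun p : ℝ × ℝ => p.1 + p.2) :=
        (Measure.map_map measurable_add (hX.prodMk hY)).symm
    _ = (P.map (fun ω => (X' ω, Y' ω))).map (fun p : ℝ × ℝ => p.1 + p.2) := by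
        rw [e1, e2, h1, h2]
    _ = P.map (fun ω => X' ω + Y' ω) :=
        Measure.map_map measurable_add (hX'.prodMk hY')

/-- Lemma 3, first assertion.
Random variables are 1-indexed (index `0` unused): `v k = ∏_{j=1}^{k} 1/(1+r_j)`
(so `v 0 = 1`) and `S*_k = ∑_{j=1}^{k} v_{j-1} Y*_j` (so `S*_0 = 0`).
Assume `l ≥ 1`, `q_l > 0`, `Y*_{n+l}` is distributed as `q_l Y*_n` and
`r_{n+l} = r_n` for all `n ≥ 1`.  Then for every `i ≥ 0` and `k ≥ 1`, the random
variable `Δ_{i,k} = S*_{il+k} − S*_{il}` has the same law as `(q_l v_l)^i S*_k`. -/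
theorem stmt14 {Ω : Type*} [MeasurableSpace Ω] (P : Measure Ω) [IsProbabilityMeasure P]
    (Ystar : ℕ → Ω → ℝ)
    (hmeas : ∀ i, Measurable (Ystar i))
    (hindep : iIndepFun (fun k : ℕ => Ystar (k + 1)) P)
    (r : ℕ → ℝ) (hr : ∀ k : ℕ, 1 ≤ k → 0 ≤ r k)
    (v : ℕ → ℝ) (hv : ∀ k, v k = ∏ j ∈ Finset.Icc 1 k, (1 + r j)⁻¹)
    (Sstar : ℕ → Ω → ℝ)
    (hSstar : ∀ k ω, Sstar k ω = ∑ j ∈ Finset.Icc 1 k, v (j - 1) * Ystar j ω)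
    (l : ℕ) (hl : 1 ≤ l) (q : ℝ) (hq : 0 < q)
    (hper : ∀ n : ℕ, 1 ≤ n →
      Measure.map (Ystar (n + l)) P = Measure.map (fun ω => q * Ystar n ω) P)
    (hrper : ∀ n : ℕ, 1 ≤ n → r (n + l) = r n) :
    ∀ i : ℕ, ∀ k : ℕ, 1 ≤ k →
      Measure.map (fun ω => Sstar (i * l + k) ω - Sstar (i * l) ω) P =
        Measure.map (fun ω => (q * v l) ^ i * Sstar k ω) P := by
  intro i k hk
  -- periodicity of v
  have hvl : ∀ n, v (n + l) = v l * v n := by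
    intro n
    rw [hv, hv, hv]
    have hdisj : Disjoint (Finset.Icc 1 l) (Finset.Icc (l + 1) (l + n)) := by
      rw [Finset.disjoint_left]
      intro a ha hb
      simp only [Finset.mem_Icc] at ha hb
      omega
    have hsplit : Finset.Icc 1 (n + l) = Finset.Icc 1 l ∪ Finset.Icc (l + 1) (l + n) := by
      ext x
      simp only [Finset.mem_union, Finset.mem_Icc]
      omega
    rw [hsplit, Finset.prod_union hdisj]
    congr 1
    have hmap : Finset.Icc (l + 1) (l + n) = (Finset.Icc 1 n).map
        ⟨fun j => l + j, add_right_injective l⟩ := by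
      ext x
      simp only [Finset.mem_map, Finset.mem_Icc, Function.Embedding.coeFn_mk]
      constructor
      · intro hx; exact ⟨x - l, by omega, by omega⟩
      · rintro ⟨a, ha, rfl⟩; omega
    rw [hmap, Finset.prod_map]
    refine Finset.prod_congr rfl fun j hj => ?_
    simp only [Function.Embedding.coeFn_mk]
    rw [show l + j = j + l by omega, hrper j (Finset.mem_Icc.1 hj).1]
  have hvil : ∀ m n : ℕ, v (m * l + n) = (v l) ^ m * v n := by
    intro m
    induction m with
    | zero => intro n; simp
    | succ m ih =>
        intro n
        have : (m + 1) * l + n = (m * l + n) + l := by ring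
        rw [this, hvl, ih, pow_succ]
        ring
  -- marginal laws after m periods
  have hmarg : ∀ n : ℕ, 1 ≤ n → ∀ m : ℕ,
      P.map (Ystar (n + m * l)) = P.map (fun ω => q ^ m * Ystar n ω) := by
    intro n hn m
    induction m with
    | zero => simp
    | succ m ih =>
        have h1 : n + (m + 1) * l = (n + m * l) + l := by ring
        rw [h1, hper (n + m * l) (by omega)]
        have h2 : P.map (fun ω => q * Ystar (n + m * l) ω) =
            (P.map (Ystar (n + m * l))).map (fun x => q * x) :=
          (Measure.map_map (measurable_const_mul q) (hmeas _)).symm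
        rw [h2, ih,
          Measure.map_map (measurable_const_mul q) ((hmeas n).const_mul (q ^ m))]
        have : ((fun x => q * x) ∘ fun ω => q ^ m * Ystar n ω) =
            fun ω => q ^ (m + 1) * Ystar n ω := by
          funext ω; simp only [Function.comp_apply, pow_succ]; ring
        rw [this]
  -- the two families
  set H : ℕ → Ω → ℝ := fun n ω => v n * Ystar (n + 1) ω with hH
  set H' : ℕ → Ω → ℝ := fun n ω => (q * v l) ^ i * (v n * Ystar (n + 1) ω) with hH'
  have hHmeas : ∀ n, Measurable (H n) := fun n => (hmeas (n + 1)).const_mul _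
  have hH'meas : ∀ n, Measurable (H' n) := fun n => ((hmeas (n + 1)).const_mul _).const_mul _
  have hHindep : iIndepFun H P :=
    hindep.comp (fun n x => v n * x) (fun n => measurable_const_mul _)
  have hH'indep : iIndepFun H' P :=
    hindep.comp (fun n x => (q * v l) ^ i * (v n * x))
      (fun n => (measurable_const_mul _).const_mul _)
  -- marginal equality
  have hHmarg : ∀ n : ℕ, P.map (H (i * l + n)) = P.map (H' n) := by
    intro n
    have hidx : i * l + n + 1 = (n + 1) + i * l := by ring
    have hc : v (i * l + n) = (v l) ^ i * v n := hvil i n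
    have e1 : P.map (H (i * l + n)) =
        (P.map (Ystar ((n + 1) + i * l))).map (fun x => v (i * l + n) * x) := by
      rw [hH]
      simp only [hidx]
      exact (Measure.map_map (measurable_const_mul _) (hmeas _)).symm
    rw [e1, hmarg (n + 1) (by omega) i,
      Measure.map_map (measurable_const_mul _) ((hmeas (n + 1)).const_mul _)]
    have : ((fun x => v (i * l + n) * x) ∘ fun ω => q ^ i * Ystar (n + 1) ω) = H' n := by
      funext ω
      simp only [Function.comp_apply, hH', hc, mul_pow]
      ring
    rw [this]
  -- the key statement by induction on k
  have key : ∀ K : ℕ,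
      P.map (fun ω => ∑ n ∈ Finset.Ico (i * l) (i * l + K), H n ω) =
        P.map (fun ω => ∑ n ∈ Finset.range K, H' n ω) := by
    intro K
    induction K with
    | zero => simp
    | succ K ih =>
        have hIco : Finset.Ico (i * l) (i * l + (K + 1)) =
            Finset.Ico (i * l) (i * l + K) ∪ {i * l + K} := by
          ext x
          simp only [Finset.mem_union, Finset.mem_Ico, Finset.mem_singleton]
          omega
        have hsum1 : ∀ ω, ∑ n ∈ Finset.Ico (i * l) (i * l + (K + 1)), H n ω =
            (∑ n ∈ Finset.Ico (i * l) (i * l + K), H n ω) + H (i * l + K) ω := by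
          intro ω
          rw [hIco, Finset.sum_union (by simp [Finset.disjoint_singleton_right])]
          simp
        have hsum2 : ∀ ω, ∑ n ∈ Finset.range (K + 1), H' n ω =
            (∑ n ∈ Finset.range K, H' n ω) + H' K ω := fun ω => Finset.sum_range_succ _ _
        simp only [hsum1, hsum2]
        have hind1 : IndepFun (fun ω => ∑ n ∈ Finset.Ico (i * l) (i * l + K), H n ω)
            (H (i * l + K)) P := by
          have := hHindep.indepFun_finset_sum_of_notMem hHmeas
            (s := Finset.Ico (i * l) (i * l + K)) (i := i * l + K) (by simp)
          have heq : (∑ n ∈ Finset.Ico (i * l) (i * l + K), H n) =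
              fun ω => ∑ n ∈ Finset.Ico (i * l) (i * l + K), H n ω := by
            funext ω; simp [Finset.sum_apply]
          rwa [heq] at this
        have hind2 : IndepFun (fun ω => ∑ n ∈ Finset.range K, H' n ω) (H' K) P := by
          have := hH'indep.indepFun_finset_sum_of_notMem hH'meas
            (s := Finset.range K) (i := K) (by simp)
          have heq : (∑ n ∈ Finset.range K, H' n) =
              fun ω => ∑ n ∈ Finset.range K, H' n ω := by
            funext ω; simp [Finset.sum_apply]
          rwa [heq] at this
        exact stmt14_map_add_eq P
          (Finset.measurable_sum _ fun n _ => hHmeas n) (hHmeas _)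
          (Finset.measurable_sum _ fun n _ => hH'meas n) (hH'meas _)
          hind1 hind2 ih (hHmarg K)
  -- rewrite both sides into the sum forms
  have hLHS : (fun ω => Sstar (i * l + k) ω - Sstar (i * l) ω) =
      fun ω => ∑ n ∈ Finset.Ico (i * l) (i * l + k), H n ω := by
    funext ω
    rw [hSstar, hSstar]
    have h1 : Finset.Icc 1 (i * l + k) =
        Finset.Icc 1 (i * l) ∪ Finset.Ioc (i * l) (i * l + k) := by
      ext x
      simp only [Finset.mem_union, Finset.mem_Icc, Finset.mem_Ioc]
      omega
    have hdisj : Disjoint (Finset.Icc 1 (i * l)) (Finset.Ioc (i * l) (i * l + k)) := by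
      rw [Finset.disjoint_left]
      intro a ha hb
      simp only [Finset.mem_Icc] at ha
      simp only [Finset.mem_Ioc] at hb
      omega
    rw [h1, Finset.sum_union hdisj]
    have h2 : ∑ j ∈ Finset.Ioc (i * l) (i * l + k), v (j - 1) * Ystar j ω =
        ∑ n ∈ Finset.Ico (i * l) (i * l + k), H n ω := by
      apply Finset.sum_nbij' (fun j => j - 1) (fun n => n + 1)
      · intro j hj; simp only [Finset.mem_Ioc] at hj; simp only [Finset.mem_Ico]; omega
      · intro n hn; simp only [Finset.mem_Ico] at hn; simp only [Finset.mem_Ioc]; omega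
      · intro j hj; simp only [Finset.mem_Ioc] at hj; omega
      · intro n hn; simp only [Finset.mem_Ico] at hn; omega
      · intro j hj
        simp only [Finset.mem_Ioc] at hj
        rw [hH]
        congr 2
        omega
    rw [h2]
    ring
  have hRHS : (fun ω => (q * v l) ^ i * Sstar k ω) =
      fun ω => ∑ n ∈ Finset.range k, H' n ω := by
    funext ω
    rw [hSstar, Finset.mul_sum]
    apply Finset.sum_nbij' (fun j => j - 1) (fun n => n + 1)
    · intro j hj; simp only [Finset.mem_Icc] at hj; simp only [Finset.mem_range]; omega
    · intro n hn; simp only [Finset.mem_range] at hn; simp only [Finset.mem_Icc]; omega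
    · intro j hj; simp only [Finset.mem_Icc] at hj; omega
    · intro n hn; simp only [Finset.mem_range] at hn; omega
    · intro j hj
      simp only [Finset.mem_Icc] at hj
      rw [hH']
      congr 3
      omega
  rw [hLHS, hRHS]
  exact key k
end

section
/- Let Y_1^*, Y_2^*, … be mutually independent real-valued random variables, (r_k)_{k≥1} nonnegative reals, v_k = ∏_{j=1}^{k} 1/(1 + r_j) (v_0 = 1), and S_k^* = Σ_{j=1}^{k} v_{j−1} Y_j^*. Suppose there exist an integer l ≥ 1 and a real q_l > 0 such that for all n ≥ 1 the random variables Y_{n+l}^* and q_l Y_n^* are identically distributed, r_{n+l} = r_n for all n ≥ 1, and q_l v_l ≤ 1. Then for every h ≥ 0 with E[e^{h S_l^*}] ≤ 1: sup_{n≥1} E[e^{h S_n^*}] ≤ max_{1≤k≤l} sup_{i≥0} E[e^{h (q_l v_l)^i S_k^*}]. -/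
open MeasureTheory ProbabilityTheory

private lemma lintegral_prod_of_iIndep' {Ω : Type*} [MeasurableSpace Ω] (P : Measure Ω)
    [IsProbabilityMeasure P] (F : ℕ → Ω → ENNReal) (hF : ∀ k, Measurable (F k))
    (hind : iIndepFun F P) (n : ℕ) :
    ∫⁻ ω, ∏ k ∈ Finset.range n, F k ω ∂P = ∏ k ∈ Finset.range n, ∫⁻ ω, F k ω ∂P := by
  induction n with
  | zero => simp
  | succ n ih =>
    have hI := hind.indepFun_prod_range_succ hF n
    have hprodmeas : Measurable (∏ k ∈ Finset.range n, F k) := by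
      have := Finset.measurable_prod (Finset.range n) (fun k (_ : k ∈ Finset.range n) => hF k)
      convert this using 1
      ext a
      simp [Finset.prod_apply]
    have hmul := lintegral_mul_eq_lintegral_mul_lintegral_of_indepFun
      hprodmeas (hF n) hI
    simp only [Pi.mul_apply, Finset.prod_apply] at hmul
    simp only [Finset.prod_range_succ]
    rw [hmul, ih]

/-- Lemma 3, second assertion.
Random variables are 1-indexed (index `0` unused): `v k = ∏_{j=1}^{k} 1/(1+r_j)`
(so `v 0 = 1`) and `S*_k = ∑_{j=1}^{k} v_{j-1} Y*_j` (so `S*_0 = 0`).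
Assume `l ≥ 1`, `q_l > 0`, `Y*_{n+l}` is distributed as `q_l Y*_n`, `r_{n+l} = r_n`
for all `n ≥ 1`, and `q_l v_l ≤ 1`.  Then for every `h ≥ 0` with `E[e^{h S*_l}] ≤ 1`:
`sup_{n≥1} E[e^{h S*_n}] ≤ max_{1 ≤ k ≤ l} sup_{i ≥ 0} E[e^{h (q_l v_l)^i S*_k}]`. -/
theorem stmt15 {Ω : Type*} [MeasurableSpace Ω] (P : Measure Ω) [IsProbabilityMeasure P]
    (Ystar : ℕ → Ω → ℝ)
    (hmeas : ∀ i, Measurable (Ystar i))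
    (hindep : iIndepFun (fun k : ℕ => Ystar (k + 1)) P)
    (r : ℕ → ℝ) (hr : ∀ k : ℕ, 1 ≤ k → 0 ≤ r k)
    (v : ℕ → ℝ) (hv : ∀ k, v k = ∏ j ∈ Finset.Icc 1 k, (1 + r j)⁻¹)
    (Sstar : ℕ → Ω → ℝ)
    (hSstar : ∀ k ω, Sstar k ω = ∑ j ∈ Finset.Icc 1 k, v (j - 1) * Ystar j ω)
    (l : ℕ) (hl : 1 ≤ l) (q : ℝ) (hq : 0 < q)
    (hper : ∀ n : ℕ, 1 ≤ n →
      Measure.map (Ystar (n + l)) P = Measure.map (fun ω => q * Ystar n ω) P)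
    (hrper : ∀ n : ℕ, 1 ≤ n → r (n + l) = r n)
    (hqv : q * v l ≤ 1)
    (h : ℝ) (hh : 0 ≤ h)
    (hSl : ∫⁻ ω, ENNReal.ofReal (Real.exp (h * Sstar l ω)) ∂P ≤ 1) :
    (⨆ n : ℕ, ∫⁻ ω, ENNReal.ofReal (Real.exp (h * Sstar (n + 1) ω)) ∂P) ≤
      ⨆ k ∈ Finset.Icc 1 l, ⨆ i : ℕ,
        ∫⁻ ω, ENNReal.ofReal (Real.exp (h * ((q * v l) ^ i * Sstar k ω))) ∂P := by
  -- basic facts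
  have hIcc : ∀ k : ℕ, Finset.Icc 1 k = Finset.Ioc 0 k := fun k => Finset.Icc_add_one_left_eq_Ioc (a := 0) (b := k)
  have hvpos : ∀ k, 0 < v k := by
    intro k
    rw [hv]
    refine Finset.prod_pos fun j hj => ?_
    have := hr j (Finset.mem_Icc.mp hj).1
    positivity
  have hc0 : (0 : ℝ) ≤ q * v l := le_of_lt (mul_pos hq (hvpos l))
  have hSm : ∀ k, Measurable (Sstar k) := by
    intro k
    have hfx : Sstar k = fun ω => ∑ j ∈ Finset.Icc 1 k, v (j - 1) * Ystar j ω :=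
      funext fun ω => hSstar k ω
    rw [hfx]
    exact Finset.measurable_sum _ fun j _ => (hmeas j).const_mul _
  -- periodicity of v
  have hvper : ∀ m, v (l + m) = v l * v m := by
    intro m
    have hmap : Finset.Ioc l (l + m) =
        Finset.map ⟨fun i => i + l, add_left_injective l⟩ (Finset.Ioc 0 m) := by
      ext j
      simp only [Finset.mem_map, Finset.mem_Ioc, Function.Embedding.coeFn_mk]
      constructor
      · intro hj; exact ⟨j - l, by omega, by omega⟩
      · rintro ⟨a, ha, rfl⟩; omega
    rw [hv, hv, hv, hIcc, hIcc, hIcc,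
      ← Finset.prod_Ioc_consecutive _ (Nat.zero_le l) (Nat.le_add_right l m)]
    congr 1
    rw [hmap, Finset.prod_map]
    refine Finset.prod_congr rfl fun i hi => ?_
    simp only [Function.Embedding.coeFn_mk]
    rw [hrper i (Finset.mem_Ioc.mp hi).1]
  -- marginal transfer
  have hmarg : ∀ (t : ℝ) (n : ℕ), 1 ≤ n →
      ∫⁻ ω, ENNReal.ofReal (Real.exp (t * Ystar (n + l) ω)) ∂P
        = ∫⁻ ω, ENNReal.ofReal (Real.exp (t * q * Ystar n ω)) ∂P := by
    intro t n hn
    have hg : Measurable fun x : ℝ => ENNReal.ofReal (Real.exp (t * x)) :=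
      ENNReal.measurable_ofReal.comp (Real.measurable_exp.comp (measurable_const_mul t))
    have h1 := lintegral_map (μ := P) hg (hmeas (n + l))
    have h2 := lintegral_map (μ := P) hg ((hmeas n).const_mul q)
    rw [← h1, hper n hn, h2]
    simp only [← mul_assoc]
  -- factorization via independence
  have hfact : ∀ (t : ℝ) (n : ℕ),
      ∫⁻ ω, ENNReal.ofReal (Real.exp (t * Sstar n ω)) ∂P
        = ∏ k ∈ Finset.range n,
            ∫⁻ ω, ENNReal.ofReal (Real.exp (t * v k * Ystar (k + 1) ω)) ∂P := by
    intro t n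
    have hF : ∀ k : ℕ,
        Measurable fun ω => ENNReal.ofReal (Real.exp (t * v k * Ystar (k + 1) ω)) := fun k =>
      ENNReal.measurable_ofReal.comp (Real.measurable_exp.comp ((hmeas (k + 1)).const_mul _))
    have hiF : iIndepFun
        (fun k ω => ENNReal.ofReal (Real.exp (t * v k * Ystar (k + 1) ω))) P := by
      have := hindep.comp (fun k x => ENNReal.ofReal (Real.exp (t * v k * x)))
        (fun k => ENNReal.measurable_ofReal.comp
          (Real.measurable_exp.comp (measurable_const_mul _)))
      exact this
    have hprod := lintegral_prod_of_iIndep' P _ hF hiF n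
    rw [← hprod]
    refine lintegral_congr fun ω => ?_
    have hIccMap : Finset.Icc 1 n =
        Finset.map ⟨fun i => i + 1, add_left_injective 1⟩ (Finset.range n) := by
      ext j
      simp only [Finset.mem_map, Finset.mem_Icc, Finset.mem_range, Function.Embedding.coeFn_mk]
      constructor
      · intro hj; exact ⟨j - 1, by omega, by omega⟩
      · rintro ⟨a, ha, rfl⟩; omega
    have hsum : t * Sstar n ω = ∑ k ∈ Finset.range n, t * v k * Ystar (k + 1) ω := by
      rw [hSstar, Finset.mul_sum, hIccMap, Finset.sum_map]
      refine Finset.sum_congr rfl fun k _ => ?_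
      simp only [Function.Embedding.coeFn_mk, Nat.add_sub_cancel]
      ring
    rw [hsum, Real.exp_sum, ENNReal.ofReal_prod_of_nonneg fun k _ => (Real.exp_pos _).le]
  -- recursion identity
  have hrec : ∀ (t : ℝ) (n : ℕ),
      ∫⁻ ω, ENNReal.ofReal (Real.exp (t * Sstar (n + l) ω)) ∂P
        = (∫⁻ ω, ENNReal.ofReal (Real.exp (t * Sstar l ω)) ∂P)
          * ∫⁻ ω, ENNReal.ofReal (Real.exp (t * (q * v l) * Sstar n ω)) ∂P := by
    intro t n
    rw [hfact t (n + l), hfact t l, hfact (t * (q * v l)) n,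
      show n + l = l + n from add_comm n l, Finset.prod_range_add]
    congr 1
    refine Finset.prod_congr rfl fun k _ => ?_
    have hidx : l + k + 1 = (k + 1) + l := by omega
    simp only [hidx]
    rw [hmarg (t * v (l + k)) (k + 1) (Nat.le_add_left 1 k)]
    have hco : t * v (l + k) * q = t * (q * v l) * v k := by rw [hvper k]; ring
    simp only [hco]
  -- convexity bound: for 0 ≤ t ≤ h, E[e^{t S_l}] ≤ 1
  have hmeasSl : Measurable fun ω => ENNReal.ofReal (Real.exp (h * Sstar l ω)) :=
    ENNReal.measurable_ofReal.comp (Real.measurable_exp.comp ((hSm l).const_mul h))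
  have hconv : ∀ t : ℝ, 0 ≤ t → t ≤ h →
      (∫⁻ ω, ENNReal.ofReal (Real.exp (t * Sstar l ω)) ∂P) ≤ 1 := by
    intro t ht hth
    rcases eq_or_lt_of_le hh with hh0 | hh0
    · have ht0 : t = 0 := le_antisymm (hth.trans hh0.symm.le) ht
      simp [ht0]
    · set lam := t / h with hlam
      have hlam0 : 0 ≤ lam := div_nonneg ht hh0.le
      have hlam1 : lam ≤ 1 := (div_le_one hh0).mpr hth
      have hmul : lam * h = t := div_mul_cancel₀ t hh0.ne'
      have hpt : ∀ ω, ENNReal.ofReal (Real.exp (t * Sstar l ω)) ≤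
          ENNReal.ofReal (1 - lam) +
            ENNReal.ofReal lam * ENNReal.ofReal (Real.exp (h * Sstar l ω)) := by
        intro ω
        have hcx := convexOn_exp.2 (Set.mem_univ (0 : ℝ))
          (Set.mem_univ (h * Sstar l ω)) (show (0:ℝ) ≤ 1 - lam by linarith) hlam0
          (show (1 - lam) + lam = 1 by ring)
        simp only [smul_eq_mul] at hcx
        have harg : (1 - lam) * 0 + lam * (h * Sstar l ω) = t * Sstar l ω := by
          rw [← hmul]; ring
        rw [harg, Real.exp_zero, mul_one] at hcx
        calc ENNReal.ofReal (Real.exp (t * Sstar l ω))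
            ≤ ENNReal.ofReal ((1 - lam) + lam * Real.exp (h * Sstar l ω)) :=
              ENNReal.ofReal_le_ofReal hcx
          _ = _ := by
              rw [ENNReal.ofReal_add (by linarith) (by positivity), ENNReal.ofReal_mul hlam0]
      calc (∫⁻ ω, ENNReal.ofReal (Real.exp (t * Sstar l ω)) ∂P)
          ≤ ∫⁻ ω, (ENNReal.ofReal (1 - lam) +
              ENNReal.ofReal lam * ENNReal.ofReal (Real.exp (h * Sstar l ω))) ∂P :=
            lintegral_mono hpt
        _ = ENNReal.ofReal (1 - lam) +
              ENNReal.ofReal lam * ∫⁻ ω, ENNReal.ofReal (Real.exp (h * Sstar l ω)) ∂P := by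
            rw [lintegral_add_left measurable_const, lintegral_const, measure_univ, mul_one,
              lintegral_const_mul _ hmeasSl]
        _ ≤ ENNReal.ofReal (1 - lam) + ENNReal.ofReal lam * 1 := by gcongr
        _ = ENNReal.ofReal ((1 - lam) + lam) := by
            rw [mul_one, ENNReal.ofReal_add (by linarith) hlam0]
        _ = 1 := by norm_num
  -- main induction
  have main : ∀ (i j k : ℕ),
      (∫⁻ ω, ENNReal.ofReal (Real.exp ((h * (q * v l) ^ j) * Sstar (i * l + k) ω)) ∂P)
        ≤ ∫⁻ ω, ENNReal.ofReal (Real.exp ((h * (q * v l) ^ (j + i)) * Sstar k ω)) ∂P := by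
    intro i
    induction i with
    | zero => intro j k; simp
    | succ i ih =>
      intro j k
      have he : (i + 1) * l + k = (i * l + k) + l := by ring
      rw [he, hrec (h * (q * v l) ^ j) (i * l + k)]
      have h1 : (∫⁻ ω, ENNReal.ofReal (Real.exp ((h * (q * v l) ^ j) * Sstar l ω)) ∂P) ≤ 1 :=
        hconv _ (by positivity) (mul_le_of_le_one_right hh (pow_le_one₀ hc0 hqv))
      have hco2 : h * (q * v l) ^ j * (q * v l) = h * (q * v l) ^ (j + 1) := by ring
      calc _ ≤ 1 * ∫⁻ ω, ENNReal.ofReal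
            (Real.exp ((h * (q * v l) ^ j * (q * v l)) * Sstar (i * l + k) ω)) ∂P := by
            gcongr
        _ = ∫⁻ ω, ENNReal.ofReal
            (Real.exp ((h * (q * v l) ^ (j + 1)) * Sstar (i * l + k) ω)) ∂P := by
            rw [one_mul]; simp only [hco2]
        _ ≤ _ := by
            have := ih (j + 1) k
            rwa [show j + 1 + i = j + (i + 1) from by ring] at this
  -- conclusion
  refine iSup_le fun n => ?_
  set k := n % l + 1 with hk
  set i := n / l with hi
  have hkl : k ∈ Finset.Icc 1 l :=
    Finset.mem_Icc.mpr ⟨Nat.le_add_left 1 _, Nat.succ_le_of_lt (Nat.mod_lt n (by omega))⟩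
  have hn1 : n + 1 = i * l + k := by
    have h0 : i * l + n % l = n := by
      rw [hi, mul_comm]; exact Nat.div_add_mod n l
    omega
  have step := main i 0 k
  rw [pow_zero, mul_one, zero_add] at step
  rw [hn1]
  refine le_trans step ?_
  have hle : (∫⁻ ω, ENNReal.ofReal (Real.exp ((h * (q * v l) ^ i) * Sstar k ω)) ∂P)
      ≤ ⨆ i' : ℕ, ∫⁻ ω, ENNReal.ofReal (Real.exp (h * ((q * v l) ^ i' * Sstar k ω))) ∂P := by
    refine le_trans (le_of_eq ?_)
      (le_iSup (fun i' => ∫⁻ ω, ENNReal.ofReal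
        (Real.exp (h * ((q * v l) ^ i' * Sstar k ω))) ∂P) i)
    simp only [mul_assoc]
  exact hle.trans (le_iSup₂ (f := fun (k' : ℕ) (_ : k' ∈ Finset.Icc 1 l) =>
    ⨆ i' : ℕ, ∫⁻ ω, ENNReal.ofReal (Real.exp (h * ((q * v l) ^ i' * Sstar k' ω))) ∂P) k hkl)
end

section
/- Let (Ω, F, P) be a probability space, u > 0, (r_k)_{k≥1} nonnegative real constants with v_k = ∏_{j=1}^{k} 1/(1 + r_j) (v_0 = 1), and (R_k)_{k≥0}, (Y_k)_{k≥1}, (α_k)_{k≥1} real-valued random variables such that almost surely R_0 = u, α_k ≥ r_k and R_k ≥ (1 + α_k) R_{k−1} − Y_k for all k ≥ 1. Suppose Y_k = b_k ξ_k with positive real constants b_k satisfying b_k v_{k−1} ≤ b_1 for all k ≥ 1, where the random vectors (α_k, ξ_k), k ≥ 1, are independent and identically distributed, and the variables Y_k^* := Y_k/(1 + α_k) are mutually independent. Then for every κ ≥ 0 with E[e^{κ Y_1^*}] ≤ 1: P[∃ k ≥ 0, R_k < 0] ≤ e^{−κu} · E[e^{κ Y_1^*}] ≤ e^{−κu}.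 -/
open MeasureTheory ProbabilityTheory
open scoped ENNReal


lemma aux_inner (ν : Measure (ℝ × ℝ)) [IsProbabilityMeasure ν] (κ c b1 : ℝ)
    (hc0 : 0 ≤ c) (hcκ : c ≤ κ)
    (hκ1 : ∫⁻ w : ℝ × ℝ, ENNReal.ofReal (Real.exp (κ * (b1 * (w.2 / (1 + w.1))))) ∂ν ≤ 1) :
    ∫⁻ w : ℝ × ℝ, ENNReal.ofReal (Real.exp (c * (b1 * (w.2 / (1 + w.1))))) ∂ν ≤ 1 := by
  have hmg : ∀ c' : ℝ, Measurable (fun w : ℝ × ℝ =>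
      ENNReal.ofReal (Real.exp (c' * (b1 * (w.2 / (1 + w.1)))))) := by
    intro c'
    apply ENNReal.measurable_ofReal.comp
    apply Real.measurable_exp.comp
    exact measurable_const.mul (measurable_const.mul
      (measurable_snd.div (measurable_const.add measurable_fst)))
  rcases eq_or_lt_of_le hc0 with h0 | h0
  · simp only [← h0, zero_mul, Real.exp_zero, ENNReal.ofReal_one, lintegral_one,
      measure_univ, le_refl]
  · have hκpos : 0 < κ := lt_of_lt_of_le h0 hcκ
    set t := c / κ with ht
    have ht0 : 0 ≤ t := div_nonneg hc0 hκpos.le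
    have ht1 : t ≤ 1 := (div_le_one hκpos).2 hcκ
    have hpt : ∀ y : ℝ, Real.exp (c * y) ≤ t * Real.exp (κ * y) + (1 - t) := by
      intro y
      have h := convexOn_exp.2 (Set.mem_univ (κ * y)) (Set.mem_univ 0) ht0
        (by linarith : (0:ℝ) ≤ 1 - t) (by ring : t + (1 - t) = 1)
      have he : t • (κ * y) + (1 - t) • (0 : ℝ) = c * y := by
        simp only [smul_eq_mul, mul_zero, add_zero, ht]
        field_simp
      rw [he] at h
      simpa [smul_eq_mul, Real.exp_zero] using h
    calc ∫⁻ w : ℝ × ℝ, ENNReal.ofReal (Real.exp (c * (b1 * (w.2 / (1 + w.1))))) ∂ν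
        ≤ ∫⁻ w : ℝ × ℝ, (ENNReal.ofReal t *
            ENNReal.ofReal (Real.exp (κ * (b1 * (w.2 / (1 + w.1))))) +
            ENNReal.ofReal (1 - t)) ∂ν := by
          refine lintegral_mono fun w => ?_
          rw [← ENNReal.ofReal_mul ht0, ← ENNReal.ofReal_add (by positivity) (by linarith)]
          exact ENNReal.ofReal_le_ofReal (hpt _)
      _ = ENNReal.ofReal t *
            (∫⁻ w : ℝ × ℝ, ENNReal.ofReal (Real.exp (κ * (b1 * (w.2 / (1 + w.1))))) ∂ν) +
            ENNReal.ofReal (1 - t) := by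
          rw [lintegral_add_right _ measurable_const, lintegral_const_mul _ (hmg κ),
            lintegral_const, measure_univ, mul_one]
      _ ≤ ENNReal.ofReal t * 1 + ENNReal.ofReal (1 - t) := by
          exact add_le_add_left (mul_le_mul_right hκ1 _) _
      _ = 1 := by
          rw [mul_one, ← ENNReal.ofReal_add ht0 (by linarith), add_sub_cancel,
            ENNReal.ofReal_one]

lemma aux_step {Ω β : Type*} [MeasurableSpace Ω] [MeasurableSpace β] (P : Measure Ω)
    [IsProbabilityMeasure P]
    (X : Ω → β) (W : Ω → ℝ × ℝ) (hX : Measurable X) (hW : Measurable W)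
    (hind : IndepFun X W P) (F : β → ℝ≥0∞) (hF : Measurable F)
    (G : β → ℝ × ℝ → ℝ≥0∞) (hG : Measurable (Function.uncurry G))
    (hbound : ∀ x, F x * ∫⁻ w, G x w ∂(P.map W) ≤ F x) :
    ∫⁻ ω, F (X ω) * G (X ω) (W ω) ∂P ≤ ∫⁻ ω, F (X ω) ∂P := by
  haveI := Measure.isProbabilityMeasure_map hX.aemeasurable (μ := P)
  haveI := Measure.isProbabilityMeasure_map hW.aemeasurable (μ := P)
  have hmH : Measurable (fun p : β × (ℝ × ℝ) => F p.1 * G p.1 p.2) :=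
    (hF.comp measurable_fst).mul hG
  have hmap : P.map (fun ω => (X ω, W ω)) = (P.map X).prod (P.map W) :=
    (indepFun_iff_map_prod_eq_prod_map_map hX.aemeasurable hW.aemeasurable).1 hind
  calc ∫⁻ ω, F (X ω) * G (X ω) (W ω) ∂P
      = ∫⁻ p : β × (ℝ × ℝ), F p.1 * G p.1 p.2 ∂(P.map (fun ω => (X ω, W ω))) :=
        (lintegral_map hmH (hX.prodMk hW)).symm
    _ = ∫⁻ p : β × (ℝ × ℝ), F p.1 * G p.1 p.2 ∂((P.map X).prod (P.map W)) := by rw [hmap]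
    _ = ∫⁻ x, ∫⁻ w, F x * G x w ∂(P.map W) ∂(P.map X) := lintegral_prod _ hmH.aemeasurable
    _ ≤ ∫⁻ x, F x ∂(P.map X) := by
        refine lintegral_mono fun x => ?_
        have hGx : Measurable fun w => G x w := hG.comp measurable_prodMk_left
        rw [lintegral_const_mul _ hGx]
        exact hbound x
    _ = ∫⁻ ω, F (X ω) ∂P := lintegral_map hF hX

/-- Corollary 2, i.i.d. environment.
Random sequences are 1-indexed (index `0` is time `0`): almost surely `R 0 = u`,
`α_k ≥ r_k` and `R_k ≥ (1+α_k) R_{k-1} − Y_k` for all `k ≥ 1`, where the `r_k ≥ 0`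
are constants and `v k = ∏_{j=1}^{k} 1/(1+r_j)` (so `v 0 = 1`).
Suppose `Y_k = b_k ξ_k` with positive constants `b_k` satisfying `b_k v_{k-1} ≤ b_1`,
the random vectors `(α_k, ξ_k)`, `k ≥ 1`, are i.i.d., and the variables
`Y*_k = Y_k/(1+α_k)` are mutually independent.  Then for every `κ ≥ 0` with
`E[e^{κ Y*_1}] ≤ 1`:
`P[∃ k ≥ 0, R_k < 0] ≤ e^{-κ u} · E[e^{κ Y*_1}] ≤ e^{-κ u}`. -/
theorem stmt16 {Ω : Type*} [MeasurableSpace Ω] (P : Measure Ω) [IsProbabilityMeasure P]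
    (u : ℝ) (hu : 0 < u)
    (r : ℕ → ℝ) (hr : ∀ k : ℕ, 1 ≤ k → 0 ≤ r k)
    (v : ℕ → ℝ) (hv : ∀ k, v k = ∏ j ∈ Finset.Icc 1 k, (1 + r j)⁻¹)
    (R Y α ξ : ℕ → Ω → ℝ)
    (hae : ∀ᵐ ω ∂P, R 0 ω = u ∧
      ∀ k : ℕ, 1 ≤ k → r k ≤ α k ω ∧ (1 + α k ω) * R (k - 1) ω - Y k ω ≤ R k ω)
    (b : ℕ → ℝ) (hb : ∀ k : ℕ, 1 ≤ k → 0 < b k)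
    (hYb : ∀ k : ℕ, 1 ≤ k → ∀ ω, Y k ω = b k * ξ k ω)
    (hbv : ∀ k : ℕ, 1 ≤ k → b k * v (k - 1) ≤ b 1)
    (hmeasα : ∀ k, Measurable (α k)) (hmeasξ : ∀ k, Measurable (ξ k))
    (hiid_indep : iIndepFun
      (fun k : ℕ => fun ω => (α (k + 1) ω, ξ (k + 1) ω)) P)
    (hiid_ident : ∀ k : ℕ, 1 ≤ k →
      Measure.map (fun ω => (α k ω, ξ k ω)) P = Measure.map (fun ω => (α 1 ω, ξ 1 ω)) P)
    (Ystar : ℕ → Ω → ℝ) (hYstar : ∀ k ω, Ystar k ω = Y k ω / (1 + α k ω))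
    (hindep : iIndepFun (fun k : ℕ => Ystar (k + 1)) P)
    (κ : ℝ) (hκ : 0 ≤ κ)
    (hκ1 : ∫⁻ ω, ENNReal.ofReal (Real.exp (κ * Ystar 1 ω)) ∂P ≤ 1) :
    P {ω | ∃ k : ℕ, R k ω < 0} ≤
      ENNReal.ofReal (Real.exp (-κ * u)) *
        ∫⁻ ω, ENNReal.ofReal (Real.exp (κ * Ystar 1 ω)) ∂P ∧
    ENNReal.ofReal (Real.exp (-κ * u)) *
        (∫⁻ ω, ENNReal.ofReal (Real.exp (κ * Ystar 1 ω)) ∂P) ≤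
      ENNReal.ofReal (Real.exp (-κ * u)) := by
  classical
  have hb1 : 0 < b 1 := hb 1 le_rfl
  set I := ∫⁻ ω, ENNReal.ofReal (Real.exp (κ * Ystar 1 ω)) ∂P with hIdef
  -- basic random sequences
  obtain ⟨Z, hZ⟩ : ∃ Z : ℕ → Ω → ℝ, ∀ k ω, Z k ω = ξ k ω / (1 + α k ω) :=
    ⟨_, fun _ _ => rfl⟩
  obtain ⟨A, hA⟩ : ∃ A : ℕ → Ω → ℝ, ∀ k ω,
      A k ω = ∏ l ∈ Finset.range k, (1 + α (l + 1) ω)⁻¹ := ⟨_, fun _ _ => rfl⟩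
  obtain ⟨S, hS⟩ : ∃ S : ℕ → Ω → ℝ, ∀ k ω,
      S k ω = ∑ i ∈ Finset.range k, b (i + 1) * Z (i + 1) ω * A i ω := ⟨_, fun _ _ => rfl⟩
  obtain ⟨C, hC⟩ : ∃ C : ℕ → Set Ω, ∀ j ω,
      ω ∈ C j ↔ ∀ i, i < j → r (i + 1) ≤ α (i + 1) ω ∧ S (i + 1) ω ≤ u :=
    ⟨fun j => {ω | ∀ i, i < j → r (i + 1) ≤ α (i + 1) ω ∧ S (i + 1) ω ≤ u},
      fun _ _ => Iff.rfl⟩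
  obtain ⟨D, hD⟩ : ∃ D : ℕ → Set Ω, ∀ i, D i = C i ∩ {ω | u < S (i + 1) ω} :=
    ⟨_, fun _ => rfl⟩
  -- measurability
  have hmZ : ∀ k, Measurable (Z k) := by
    intro k
    have : Z k = fun ω => ξ k ω / (1 + α k ω) := funext fun ω => hZ k ω
    rw [this]; exact (hmeasξ k).div (measurable_const.add (hmeasα k))
  have hmA : ∀ k, Measurable (A k) := by
    intro k
    have : A k = fun ω => ∏ l ∈ Finset.range k, (1 + α (l + 1) ω)⁻¹ := funext fun ω => hA k ω
    rw [this]
    exact Finset.measurable_prod _ fun l _ => (measurable_const.add (hmeasα (l + 1))).inv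
  have hmS : ∀ k, Measurable (S k) := by
    intro k
    have : S k = fun ω => ∑ i ∈ Finset.range k, b (i + 1) * Z (i + 1) ω * A i ω :=
      funext fun ω => hS k ω
    rw [this]
    exact Finset.measurable_sum _ fun i _ => ((hmZ (i + 1)).const_mul _).mul (hmA i)
  have hmCset : ∀ j, MeasurableSet (C j) := by
    intro j
    have : C j = ⋂ i ∈ Finset.range j,
        ({ω | r (i + 1) ≤ α (i + 1) ω} ∩ {ω | S (i + 1) ω ≤ u}) := by
      ext ω
      rw [hC]
      simp [Set.mem_iInter, Finset.mem_range]
    rw [this]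
    exact Finset.measurableSet_biInter _ fun i _ =>
      (measurableSet_le measurable_const (hmeasα _)).inter
        (measurableSet_le (hmS _) measurable_const)
  have hmDset : ∀ i, MeasurableSet (D i) := by
    intro i
    rw [hD]
    exact (hmCset i).inter (measurableSet_lt measurable_const (hmS (i + 1)))
  have hmind : ∀ (s : Set Ω), MeasurableSet s → ∀ k,
      Measurable (s.indicator (fun ω => ENNReal.ofReal (Real.exp (κ * S k ω)))) :=
    fun s hs k => (ENNReal.measurable_ofReal.comp
      (Real.measurable_exp.comp (measurable_const.mul (hmS k)))).indicator hs
  have hCmono : ∀ j, C (j + 1) ⊆ C j := fun j ω hω =>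
    (hC j ω).2 fun i hi => (hC (j + 1) ω).1 hω i (by omega)
  have hY1 : ∀ ω, Ystar 1 ω = b 1 * Z 1 ω := by
    intro ω
    rw [hYstar, hYb 1 le_rfl, hZ, mul_div_assoc]
  have hS1 : ∀ ω, S 1 ω = Ystar 1 ω := by
    intro ω
    rw [hS, Finset.sum_range_one, hA, Finset.prod_range_zero, mul_one, hY1]
  have hvr : ∀ m : ℕ, v m = ∏ l ∈ Finset.range m, (1 + r (l + 1))⁻¹ := by
    intro m
    rw [hv m, ← Finset.Ico_add_one_right_eq_Icc, Finset.prod_Ico_eq_prod_range]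
    try simp only [Nat.add_sub_cancel]
    exact Finset.prod_congr rfl fun l _ => by rw [add_comm 1 l]
  -- the i.i.d. law ν₁ and its exponential-moment bound
  have hmpair : ∀ k, Measurable fun ω => (α k ω, ξ k ω) :=
    fun k => (hmeasα k).prodMk (hmeasξ k)
  set ν₁ := Measure.map (fun ω => (α 1 ω, ξ 1 ω)) P with hν₁def
  haveI hprob₁ : IsProbabilityMeasure ν₁ := Measure.isProbabilityMeasure_map (hmpair 1).aemeasurable
  have hmg : ∀ c' : ℝ, Measurable (fun w : ℝ × ℝ =>
      ENNReal.ofReal (Real.exp (c' * (b 1 * (w.2 / (1 + w.1)))))) := by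
    intro c'
    exact ENNReal.measurable_ofReal.comp (Real.measurable_exp.comp
      (measurable_const.mul (measurable_const.mul
        (measurable_snd.div (measurable_const.add measurable_fst)))))
  have hκ1' : ∫⁻ w : ℝ × ℝ, ENNReal.ofReal (Real.exp (κ * (b 1 * (w.2 / (1 + w.1))))) ∂ν₁ ≤ 1 := by
    rw [hν₁def, lintegral_map (hmg κ) (hmpair 1)]
    show ∫⁻ ω, ENNReal.ofReal (Real.exp (κ * (b 1 * (ξ 1 ω / (1 + α 1 ω))))) ∂P ≤ 1
    have he : ∀ ω : Ω, ENNReal.ofReal (Real.exp (κ * (b 1 * (ξ 1 ω / (1 + α 1 ω))))) =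
        ENNReal.ofReal (Real.exp (κ * Ystar 1 ω)) := fun ω => by
      rw [hYstar, hYb 1 le_rfl, mul_div_assoc]
    rw [lintegral_congr he, ← hIdef]
    exact hκ1
  -- the one-step supermartingale estimate
  have key : ∀ m : ℕ,
      ∫⁻ ω, (C m).indicator (fun ω => ENNReal.ofReal (Real.exp (κ * S (m + 1) ω))) ω ∂P ≤
      ∫⁻ ω, (C m).indicator (fun ω => ENNReal.ofReal (Real.exp (κ * S m ω))) ω ∂P := by
    intro m
    obtain ⟨px, hpx⟩ : ∃ px : (↥(Finset.range m) → ℝ × ℝ) → ℕ → ℝ, ∀ x l,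
        px x l = if h : l < m then (x ⟨l, Finset.mem_range.mpr h⟩).1 else 0 :=
      ⟨_, fun _ _ => rfl⟩
    obtain ⟨qx, hqx⟩ : ∃ qx : (↥(Finset.range m) → ℝ × ℝ) → ℕ → ℝ, ∀ x l,
        qx x l = if h : l < m then (x ⟨l, Finset.mem_range.mpr h⟩).2 else 0 :=
      ⟨_, fun _ _ => rfl⟩
    obtain ⟨Ax, hAx⟩ : ∃ Ax : (↥(Finset.range m) → ℝ × ℝ) → ℕ → ℝ, ∀ x k,
        Ax x k = ∏ l ∈ Finset.range k, (1 + px x l)⁻¹ := ⟨_, fun _ _ => rfl⟩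
    obtain ⟨Sx, hSx⟩ : ∃ Sx : (↥(Finset.range m) → ℝ × ℝ) → ℕ → ℝ, ∀ x k,
        Sx x k = ∑ i ∈ Finset.range k, b (i + 1) * (qx x i / (1 + px x i)) * Ax x i :=
      ⟨_, fun _ _ => rfl⟩
    obtain ⟨Cx, hCxmem⟩ : ∃ Cx : Set (↥(Finset.range m) → ℝ × ℝ), ∀ x,
        x ∈ Cx ↔ ∀ i, i < m → r (i + 1) ≤ px x i ∧ Sx x (i + 1) ≤ u :=
      ⟨{x | ∀ i, i < m → r (i + 1) ≤ px x i ∧ Sx x (i + 1) ≤ u}, fun _ => Iff.rfl⟩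
    obtain ⟨F, hF⟩ : ∃ F : (↥(Finset.range m) → ℝ × ℝ) → ℝ≥0∞, ∀ x,
        F x = Cx.indicator (fun x => ENNReal.ofReal (Real.exp (κ * Sx x m))) x :=
      ⟨_, fun _ => rfl⟩
    obtain ⟨G, hG⟩ : ∃ G : (↥(Finset.range m) → ℝ × ℝ) → ℝ × ℝ → ℝ≥0∞, ∀ x w,
        G x w = ENNReal.ofReal (Real.exp (κ * (b (m + 1) * (w.2 / (1 + w.1)) * Ax x m))) :=
      ⟨_, fun _ _ => rfl⟩
    obtain ⟨X, hX⟩ : ∃ X : Ω → (↥(Finset.range m) → ℝ × ℝ), ∀ ω i,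
        X ω i = (α (i.1 + 1) ω, ξ (i.1 + 1) ω) := ⟨_, fun _ _ => rfl⟩
    obtain ⟨W, hW⟩ : ∃ W : Ω → ℝ × ℝ, ∀ ω, W ω = (α (m + 1) ω, ξ (m + 1) ω) :=
      ⟨_, fun _ => rfl⟩
    have hXeq : X = fun ω i => (α (i.1 + 1) ω, ξ (i.1 + 1) ω) :=
      funext fun ω => funext fun i => hX ω i
    have hWeq : W = fun ω => (α (m + 1) ω, ξ (m + 1) ω) := funext fun ω => hW ω
    -- measurability
    have hmpx : ∀ l, Measurable fun x : (↥(Finset.range m) → ℝ × ℝ) => px x l := by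
      intro l
      have he : (fun x : (↥(Finset.range m) → ℝ × ℝ) => px x l) =
          fun x => if h : l < m then (x ⟨l, Finset.mem_range.mpr h⟩).1 else 0 :=
        funext fun x => hpx x l
      rw [he]
      by_cases h : l < m
      · simp only [dif_pos h]
        exact (measurable_pi_apply _).fst
      · simp only [dif_neg h]
        exact measurable_const
    have hmqx : ∀ l, Measurable fun x : (↥(Finset.range m) → ℝ × ℝ) => qx x l := by
      intro l
      have he : (fun x : (↥(Finset.range m) → ℝ × ℝ) => qx x l) =
          fun x => if h : l < m then (x ⟨l, Finset.mem_range.mpr h⟩).2 else 0 :=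
        funext fun x => hqx x l
      rw [he]
      by_cases h : l < m
      · simp only [dif_pos h]
        exact (measurable_pi_apply _).snd
      · simp only [dif_neg h]
        exact measurable_const
    have hmAx : ∀ k, Measurable fun x : (↥(Finset.range m) → ℝ × ℝ) => Ax x k := by
      intro k
      have he : (fun x : (↥(Finset.range m) → ℝ × ℝ) => Ax x k) =
          fun x => ∏ l ∈ Finset.range k, (1 + px x l)⁻¹ := funext fun x => hAx x k
      rw [he]
      exact Finset.measurable_prod _ fun l _ => (measurable_const.add (hmpx l)).inv
    have hmSx : ∀ k, Measurable fun x : (↥(Finset.range m) → ℝ × ℝ) => Sx x k := by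
      intro k
      have he : (fun x : (↥(Finset.range m) → ℝ × ℝ) => Sx x k) =
          fun x => ∑ i ∈ Finset.range k, b (i + 1) * (qx x i / (1 + px x i)) * Ax x i :=
        funext fun x => hSx x k
      rw [he]
      exact Finset.measurable_sum _ fun i _ =>
        (((hmqx i).div (measurable_const.add (hmpx i))).const_mul _).mul (hmAx i)
    have hmCx : MeasurableSet Cx := by
      have he : Cx = ⋂ i ∈ Finset.range m,
          ({x : (↥(Finset.range m) → ℝ × ℝ) | r (i + 1) ≤ px x i} ∩
            {x : (↥(Finset.range m) → ℝ × ℝ) | Sx x (i + 1) ≤ u}) := by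
        ext x
        rw [hCxmem]
        simp [Set.mem_iInter, Finset.mem_range]
      rw [he]
      exact Finset.measurableSet_biInter _ fun i _ =>
        (measurableSet_le measurable_const (hmpx i)).inter
          (measurableSet_le (hmSx _) measurable_const)
    have hmF : Measurable F := by
      have he : F = Cx.indicator (fun x => ENNReal.ofReal (Real.exp (κ * Sx x m))) :=
        funext fun x => hF x
      rw [he]
      exact (ENNReal.measurable_ofReal.comp
        (Real.measurable_exp.comp (measurable_const.mul (hmSx m)))).indicator hmCx
    have hmG : Measurable (Function.uncurry G) := by
      have he : Function.uncurry G = fun p : (↥(Finset.range m) → ℝ × ℝ) × (ℝ × ℝ) =>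
          ENNReal.ofReal (Real.exp (κ * (b (m + 1) * (p.2.2 / (1 + p.2.1)) * Ax p.1 m))) :=
        funext fun p => hG p.1 p.2
      rw [he]
      exact ENNReal.measurable_ofReal.comp (Real.measurable_exp.comp
        (measurable_const.mul ((measurable_const.mul
          (measurable_snd.snd.div (measurable_const.add measurable_snd.fst))).mul
            ((hmAx m).comp measurable_fst))))
    have hmX : Measurable X := by
      rw [hXeq]
      exact measurable_pi_lambda _ fun i => hmpair _
    have hmW : Measurable W := by
      rw [hWeq]
      exact hmpair _
    -- pointwise reconstruction identities
    have hpxX : ∀ (ω : Ω) (l : ℕ), l < m → px (X ω) l = α (l + 1) ω := by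
      intro ω l h
      rw [hpx, dif_pos h, hX]
    have hqxX : ∀ (ω : Ω) (l : ℕ), l < m → qx (X ω) l = ξ (l + 1) ω := by
      intro ω l h
      rw [hqx, dif_pos h, hX]
    have hAxX : ∀ (ω : Ω) (k : ℕ), k ≤ m → Ax (X ω) k = A k ω := by
      intro ω k hk
      rw [hA, hAx]
      exact Finset.prod_congr rfl fun l hl => by
        rw [hpxX ω l (lt_of_lt_of_le (Finset.mem_range.1 hl) hk)]
    have hSxX : ∀ (ω : Ω) (k : ℕ), k ≤ m → Sx (X ω) k = S k ω := by
      intro ω k hk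
      rw [hS, hSx]
      refine Finset.sum_congr rfl fun i hi => ?_
      have him : i < m := lt_of_lt_of_le (Finset.mem_range.1 hi) hk
      rw [hpxX ω i him, hqxX ω i him, hAxX ω i (by omega), hZ]
    have hCxX : ∀ ω : Ω, X ω ∈ Cx ↔ ω ∈ C m := by
      intro ω
      rw [hC, hCxmem]
      constructor
      · intro h i hi
        have h2 := h i hi
        rwa [hpxX ω i hi, hSxX ω (i + 1) (by omega)] at h2
      · intro h i hi
        have h2 := h i hi
        rwa [← hpxX ω i hi, ← hSxX ω (i + 1) (by omega)] at h2
    have hFX : ∀ ω : Ω, F (X ω) =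
        (C m).indicator (fun ω => ENNReal.ofReal (Real.exp (κ * S m ω))) ω := by
      intro ω
      by_cases hω : ω ∈ C m
      · rw [hF, Set.indicator_of_mem ((hCxX ω).2 hω), Set.indicator_of_mem hω,
          hSxX ω m le_rfl]
      · rw [hF, Set.indicator_of_notMem (fun hx => hω ((hCxX ω).1 hx)),
          Set.indicator_of_notMem hω]
    have hprod : ∀ ω : Ω,
        (C m).indicator (fun ω => ENNReal.ofReal (Real.exp (κ * S (m + 1) ω))) ω =
          F (X ω) * G (X ω) (W ω) := by
      intro ω
      by_cases hω : ω ∈ C m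
      · rw [Set.indicator_of_mem hω, hF, Set.indicator_of_mem ((hCxX ω).2 hω)]
        have hGval : G (X ω) (W ω) =
            ENNReal.ofReal (Real.exp (κ * (b (m + 1) * Z (m + 1) ω * A m ω))) := by
          rw [hG, hW, hAxX ω m le_rfl, hZ]
        rw [hGval, hSxX ω m le_rfl, ← ENNReal.ofReal_mul (Real.exp_nonneg _),
          ← Real.exp_add]
        congr 2
        rw [hS (m + 1), hS m, Finset.sum_range_succ, mul_add]
      · rw [Set.indicator_of_notMem hω, hF,
          Set.indicator_of_notMem (fun hx => hω ((hCxX ω).1 hx)), zero_mul]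
    -- independence
    have hXW : IndepFun X W P := by
      rw [hXeq, hWeq]
      have h := hiid_indep.indepFun_finset (Finset.range m) {m}
        (by simp [Finset.disjoint_singleton_right]) (fun k => hmpair (k + 1))
      have h2 := h.comp (_mγ' := inferInstance) (φ := id) (ψ := fun w : (↥({m} : Finset ℕ) → ℝ × ℝ) =>
        w ⟨m, Finset.mem_singleton_self m⟩) measurable_id (measurable_pi_apply _)
      exact h2
    -- the conditional bound
    have hbound : ∀ x : (↥(Finset.range m) → ℝ × ℝ),
        F x * ∫⁻ w, G x w ∂(Measure.map W P) ≤ F x := by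
      intro x
      by_cases hx : x ∈ Cx
      · have hmapW : Measure.map W P = ν₁ := by
          rw [hWeq, hν₁def]
          exact hiid_ident (m + 1) (by omega)
        have hxc := (hCxmem x).1 hx
        have hfac : ∀ i, i < m →
            (0:ℝ) < 1 + px x i ∧ (1 + px x i)⁻¹ ≤ (1 + r (i + 1))⁻¹ := by
          intro i hi
          have h1 := (hxc i hi).1
          have h2 := hr (i + 1) (by omega)
          constructor
          · linarith
          · exact inv_anti₀ (by linarith) (by linarith)
        have hA0 : 0 ≤ Ax x m := by
          rw [hAx]
          exact Finset.prod_nonneg fun l hl =>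
            inv_nonneg.2 (le_of_lt (hfac l (Finset.mem_range.1 hl)).1)
        have hAv : Ax x m ≤ v m := by
          rw [hAx, hvr m]
          exact Finset.prod_le_prod
            (fun l hl => inv_nonneg.2 (le_of_lt (hfac l (Finset.mem_range.1 hl)).1))
            (fun l hl => (hfac l (Finset.mem_range.1 hl)).2)
        have hbm : 0 < b (m + 1) := hb (m + 1) (by omega)
        have hbAv : b (m + 1) * Ax x m ≤ b 1 := by
          have h1 : b (m + 1) * Ax x m ≤ b (m + 1) * v m :=
            mul_le_mul_of_nonneg_left hAv hbm.le
          have h2 := hbv (m + 1) (by omega)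
          simp only [Nat.add_sub_cancel] at h2
          linarith
        obtain ⟨c, hc⟩ : ∃ c : ℝ, c = κ * (b (m + 1) * Ax x m) / b 1 := ⟨_, rfl⟩
        have hc0 : 0 ≤ c := by
          rw [hc]
          exact div_nonneg (mul_nonneg hκ (mul_nonneg hbm.le hA0)) hb1.le
        have hcκ : c ≤ κ := by
          rw [hc, div_le_iff₀ hb1]
          nlinarith
        have hGc : ∀ w : ℝ × ℝ, G x w =
            ENNReal.ofReal (Real.exp (c * (b 1 * (w.2 / (1 + w.1))))) := by
          intro w
          rw [hG]
          have hcb : c * b 1 = κ * (b (m + 1) * Ax x m) := by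
            rw [hc]
            field_simp
          have harg : κ * (b (m + 1) * (w.2 / (1 + w.1)) * Ax x m) =
              c * (b 1 * (w.2 / (1 + w.1))) := by
            linear_combination (-(w.2 / (1 + w.1))) * hcb
          rw [harg]
        rw [hmapW, lintegral_congr hGc]
        calc F x * ∫⁻ w : ℝ × ℝ,
              ENNReal.ofReal (Real.exp (c * (b 1 * (w.2 / (1 + w.1))))) ∂ν₁
            ≤ F x * 1 := mul_le_mul_right (aux_inner ν₁ κ c (b 1) hc0 hcκ hκ1') _
          _ = F x := mul_one _
      · rw [hF, Set.indicator_of_notMem hx, zero_mul]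
    calc ∫⁻ ω, (C m).indicator (fun ω => ENNReal.ofReal (Real.exp (κ * S (m + 1) ω))) ω ∂P
        = ∫⁻ ω, F (X ω) * G (X ω) (W ω) ∂P := lintegral_congr hprod
      _ ≤ ∫⁻ ω, F (X ω) ∂P := aux_step P X W hmX hmW hXW F hmF G hmG hbound
      _ = ∫⁻ ω, (C m).indicator (fun ω => ENNReal.ofReal (Real.exp (κ * S m ω))) ω ∂P :=
          lintegral_congr hFX
  -- splitting at the first passage time
  have hsplit : ∀ i : ℕ,
      (∫⁻ ω, (D i).indicator (fun ω => ENNReal.ofReal (Real.exp (κ * S (i + 1) ω))) ω ∂P) +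
      (∫⁻ ω, (C (i + 1)).indicator (fun ω => ENNReal.ofReal (Real.exp (κ * S (i + 1) ω))) ω ∂P) ≤
      ∫⁻ ω, (C i).indicator (fun ω => ENNReal.ofReal (Real.exp (κ * S (i + 1) ω))) ω ∂P := by
    intro i
    rw [← lintegral_add_left (hmind _ (hmDset i) (i + 1))]
    refine lintegral_mono fun ω => ?_
    by_cases h1 : ω ∈ D i
    · have hω : ω ∈ C i := ((hD i) ▸ h1).1
      have hSu : u < S (i + 1) ω := ((hD i) ▸ h1).2
      have h2 : ω ∉ C (i + 1) := by
        intro h2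
        have := ((hC (i + 1) ω).1 h2 i (by omega)).2
        linarith
      rw [Set.indicator_of_mem h1, Set.indicator_of_notMem h2, Set.indicator_of_mem hω,
        add_zero]
    · rw [Set.indicator_of_notMem h1, zero_add]
      by_cases h2 : ω ∈ C (i + 1)
      · rw [Set.indicator_of_mem h2, Set.indicator_of_mem (hCmono i h2)]
      · rw [Set.indicator_of_notMem h2]
        exact zero_le
  have hbase : ∫⁻ ω, (C 0).indicator (fun ω => ENNReal.ofReal (Real.exp (κ * S 1 ω))) ω ∂P
      = I := by
    have hC0 : C 0 = Set.univ := by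
      ext ω
      simp only [Set.mem_univ, iff_true]
      exact (hC 0 ω).2 fun i hi => absurd hi (by omega)
    rw [hC0]
    simp only [Set.indicator_univ]
    rw [hIdef]
    exact lintegral_congr fun ω => by rw [hS1 ω]
  have hmain : ∀ n : ℕ, 1 ≤ n →
      (∑ i ∈ Finset.range n,
        ∫⁻ ω, (D i).indicator (fun ω => ENNReal.ofReal (Real.exp (κ * S (i + 1) ω))) ω ∂P) +
      (∫⁻ ω, (C n).indicator (fun ω => ENNReal.ofReal (Real.exp (κ * S n ω))) ω ∂P) ≤ I := by
    intro n hn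
    induction n, hn using Nat.le_induction with
    | base =>
      rw [Finset.sum_range_one]
      exact le_trans (hsplit 0) (le_of_eq hbase)
    | succ n hn ih =>
      rw [Finset.sum_range_succ, add_assoc]
      exact le_trans (add_le_add_right (le_trans (hsplit n) (key n)) _) ih
  have hKle : ∀ n : ℕ,
      (∑ i ∈ Finset.range n,
        ∫⁻ ω, (D i).indicator (fun ω => ENNReal.ofReal (Real.exp (κ * S (i + 1) ω))) ω ∂P) ≤ I := by
    intro n
    rcases Nat.eq_zero_or_pos n with rfl | hn
    · simp
    · exact le_trans le_self_add (hmain n hn)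
  have hPD : ∀ i : ℕ, P (D i) ≤ ENNReal.ofReal (Real.exp (-κ * u)) *
      ∫⁻ ω, (D i).indicator (fun ω => ENNReal.ofReal (Real.exp (κ * S (i + 1) ω))) ω ∂P := by
    intro i
    rw [← lintegral_indicator_one (hmDset i), ← lintegral_const_mul _ (hmind _ (hmDset i) (i + 1))]
    refine lintegral_mono fun ω => ?_
    by_cases h : ω ∈ D i
    · rw [Set.indicator_of_mem h, Set.indicator_of_mem h, Pi.one_apply,
        ← ENNReal.ofReal_mul (Real.exp_nonneg _), ← Real.exp_add]
      have hSu : u < S (i + 1) ω := ((hD i) ▸ h).2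
      have hnn : (0:ℝ) ≤ -κ * u + κ * S (i + 1) ω := by nlinarith
      calc (1 : ℝ≥0∞) = ENNReal.ofReal (Real.exp 0) := by simp
        _ ≤ ENNReal.ofReal (Real.exp (-κ * u + κ * S (i + 1) ω)) :=
            ENNReal.ofReal_le_ofReal (Real.exp_le_exp.2 hnn)
    · rw [Set.indicator_of_notMem h, Set.indicator_of_notMem h, mul_zero]
  -- the events E n
  obtain ⟨E, hE⟩ : ∃ E : ℕ → Set Ω, ∀ n, E n =
      {ω | ∀ i : ℕ, r (i + 1) ≤ α (i + 1) ω} ∩ ⋃ i ∈ Finset.range n, {ω | u < S (i + 1) ω} :=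
    ⟨_, fun _ => rfl⟩
  have hEsub : ∀ n, E n ⊆ ⋃ i ∈ Finset.range n, D i := by
    intro n ω hω
    rw [hE] at hω
    obtain ⟨hα', hex⟩ := hω
    simp only [Set.mem_iUnion, Finset.mem_range, Set.mem_setOf_eq, exists_prop] at hex ⊢
    obtain ⟨j, hjn, hju⟩ := hex
    have hexists : ∃ j, u < S (j + 1) ω := ⟨j, hju⟩
    refine ⟨Nat.find hexists, by have := Nat.find_min' hexists hju; omega, ?_⟩
    rw [hD]
    constructor
    · refine (hC _ _).2 fun i hi => ⟨hα' i, ?_⟩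
      exact not_lt.1 (Nat.find_min hexists hi)
    · exact Nat.find_spec hexists
  have hEbound : ∀ n, P (E n) ≤ ENNReal.ofReal (Real.exp (-κ * u)) * I := by
    intro n
    calc P (E n) ≤ P (⋃ i ∈ Finset.range n, D i) := measure_mono (hEsub n)
      _ ≤ ∑ i ∈ Finset.range n, P (D i) := measure_biUnion_finset_le _ _
      _ ≤ ∑ i ∈ Finset.range n, ENNReal.ofReal (Real.exp (-κ * u)) *
            ∫⁻ ω, (D i).indicator (fun ω => ENNReal.ofReal (Real.exp (κ * S (i + 1) ω))) ω ∂P :=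
          Finset.sum_le_sum fun i _ => hPD i
      _ = ENNReal.ofReal (Real.exp (-κ * u)) * ∑ i ∈ Finset.range n,
            ∫⁻ ω, (D i).indicator (fun ω => ENNReal.ofReal (Real.exp (κ * S (i + 1) ω))) ω ∂P :=
          (Finset.mul_sum _ _ _).symm
      _ ≤ ENNReal.ofReal (Real.exp (-κ * u)) * I := mul_le_mul_right (hKle n) _
  obtain ⟨Einf, hEinf⟩ : ∃ Einf : Set Ω, Einf =
      {ω | ∀ i : ℕ, r (i + 1) ≤ α (i + 1) ω} ∩ ⋃ i : ℕ, {ω | u < S (i + 1) ω} := ⟨_, rfl⟩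
  have hEunion : Einf = ⋃ n, E n := by
    ext ω
    rw [hEinf]
    simp only [Set.mem_inter_iff, Set.mem_iUnion, Set.mem_setOf_eq, hE,
      Finset.mem_range, exists_prop]
    constructor
    · rintro ⟨h1, i, h2⟩
      exact ⟨i + 1, h1, i, by omega, h2⟩
    · rintro ⟨n, h1, i, _, h2⟩
      exact ⟨h1, i, h2⟩
  have hEmono : Monotone E := by
    intro a c hac ω hω
    rw [hE] at hω ⊢
    obtain ⟨h1, h2⟩ := hω
    refine ⟨h1, ?_⟩
    simp only [Set.mem_iUnion, Finset.mem_range, exists_prop] at h2 ⊢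
    obtain ⟨i, hia, hiu⟩ := h2
    exact ⟨i, by omega, hiu⟩
  have hPEinf : P Einf ≤ ENNReal.ofReal (Real.exp (-κ * u)) * I := by
    rw [hEunion, hEmono.directed_le.measure_iUnion]
    exact iSup_le hEbound
  -- almost sure inclusion of the ruin event
  have hincl : {ω | ∃ k : ℕ, R k ω < 0} \ Einf ⊆
      {ω | ¬ (R 0 ω = u ∧ ∀ k : ℕ, 1 ≤ k →
        r k ≤ α k ω ∧ (1 + α k ω) * R (k - 1) ω - Y k ω ≤ R k ω)} := by
    rintro ω ⟨hruin, hnot⟩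
    intro hgood
    apply hnot
    obtain ⟨hR0, hstep⟩ := hgood
    have h1α : ∀ k : ℕ, (0:ℝ) < 1 + α (k + 1) ω := by
      intro k
      have h1 := (hstep (k + 1) (by omega)).1
      have h2 := hr (k + 1) (by omega)
      linarith
    obtain ⟨Q, hQ⟩ : ∃ Q : ℕ → ℝ, ∀ k, Q k = ∏ l ∈ Finset.range k, (1 + α (l + 1) ω) :=
      ⟨_, fun _ => rfl⟩
    have hQpos : ∀ k, 0 < Q k := by
      intro k
      rw [hQ]
      exact Finset.prod_pos fun l _ => h1α l
    have hQA : ∀ k, Q k * A k ω = 1 := by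
      intro k
      rw [hQ, hA, Finset.prod_inv_distrib]
      exact mul_inv_cancel₀ (ne_of_gt (by rw [← hQ]; exact hQpos k))
    have hclaim : ∀ k, Q k * (u - S k ω) ≤ R k ω := by
      intro k
      induction k with
      | zero =>
        rw [hQ, hS, hR0]
        simp
      | succ k ih =>
        have hstep' := (hstep (k + 1) (by omega)).2
        simp only [Nat.add_sub_cancel] at hstep'
        have hkey2 : Q (k + 1) * (u - S (k + 1) ω) =
            (1 + α (k + 1) ω) * (Q k * (u - S k ω)) - Y (k + 1) ω := by
          have e1 : S (k + 1) ω = S k ω + b (k + 1) * Z (k + 1) ω * A k ω := by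
            rw [hS, hS, Finset.sum_range_succ]
          have e2 : Q (k + 1) = Q k * (1 + α (k + 1) ω) := by
            rw [hQ, hQ, Finset.prod_range_succ]
          have e3 : Z (k + 1) ω * (1 + α (k + 1) ω) = ξ (k + 1) ω := by
            rw [hZ]
            exact div_mul_cancel₀ _ (ne_of_gt (h1α k))
          have e4 : Y (k + 1) ω = b (k + 1) * ξ (k + 1) ω := hYb (k + 1) (by omega) ω
          have e5 := hQA k
          rw [e1, e2, e4]
          linear_combination (-(1 + α (k + 1) ω) * b (k + 1) * Z (k + 1) ω) * e5 +
            (-(b (k + 1))) * e3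
        have h6 := mul_le_mul_of_nonneg_left ih (le_of_lt (h1α k))
        linarith
    obtain ⟨k, hk⟩ := hruin
    have hk0 : k ≠ 0 := by
      rintro rfl
      rw [hR0] at hk
      linarith
    obtain ⟨j, rfl⟩ : ∃ j, k = j + 1 := ⟨k - 1, by omega⟩
    have hSj : u < S (j + 1) ω := by
      nlinarith [hclaim (j + 1), hQpos (j + 1)]
    rw [hEinf]
    exact ⟨fun i => (hstep (i + 1) (by omega)).1, Set.mem_iUnion.2 ⟨j, hSj⟩⟩
  have hnull : P ({ω | ∃ k : ℕ, R k ω < 0} \ Einf) = 0 :=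
    measure_mono_null hincl (ae_iff.1 hae)
  have final1 : P {ω | ∃ k : ℕ, R k ω < 0} ≤ ENNReal.ofReal (Real.exp (-κ * u)) * I := by
    calc P {ω | ∃ k : ℕ, R k ω < 0}
        ≤ P (Einf ∪ ({ω | ∃ k : ℕ, R k ω < 0} \ Einf)) := by
          refine measure_mono fun ω hω => ?_
          by_cases h : ω ∈ Einf
          · exact Or.inl h
          · exact Or.inr ⟨hω, h⟩
      _ ≤ P Einf + P ({ω | ∃ k : ℕ, R k ω < 0} \ Einf) := measure_union_le _ _
      _ ≤ ENNReal.ofReal (Real.exp (-κ * u)) * I + 0 := add_le_add hPEinf (le_of_eq hnull)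
      _ = ENNReal.ofReal (Real.exp (-κ * u)) * I := add_zero _
  refine ⟨final1, ?_⟩
  calc ENNReal.ofReal (Real.exp (-κ * u)) * I
      ≤ ENNReal.ofReal (Real.exp (-κ * u)) * 1 := mul_le_mul_right hκ1 _
    _ = ENNReal.ofReal (Real.exp (-κ * u)) := mul_one _
end

section
/- Let Y_1, Y_2, … be mutually independent real-valued random variables where Y_n has the Gaussian distribution N(a_n, 1) with mean a_n and variance 1, and suppose a_1 + a_2 = −1 and a_n + a_{n+1} ≤ −1 for all n ≥ 1. Set S_k = Y_1 + ⋯ + Y_k. Then for every u > 0: P[sup_{k≥1} S_k > u] ≤ e^{max(a_1 + 1/2, 0)} · e^{−u}. -/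
open MeasureTheory ProbabilityTheory Real Finset
open scoped ENNReal NNReal

lemma gauss_pdf_shift (a x : ℝ) :
    Real.exp x * gaussianPDFReal a 1 x = Real.exp (a + 1/2) * gaussianPDFReal (a+1) 1 x := by
  simp only [gaussianPDFReal, NNReal.coe_one, mul_one]
  rw [show Real.exp x * ((√(2 * π))⁻¹ * rexp (-(x - a) ^ 2 / 2))
      = (√(2 * π))⁻¹ * (rexp x * rexp (-(x - a) ^ 2 / 2)) by ring,
    show Real.exp (a + 1/2) * ((√(2 * π))⁻¹ * rexp (-(x - (a+1)) ^ 2 / 2))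
      = (√(2 * π))⁻¹ * (rexp (a + 1/2) * rexp (-(x - (a+1)) ^ 2 / 2)) by ring,
    ← Real.exp_add, ← Real.exp_add]
  congr 1
  ring

lemma integrable_exp_add_gauss (a c : ℝ) :
    Integrable (fun x => Real.exp (x + c)) (gaussianReal a 1) := by
  rw [gaussianReal_of_var_ne_zero a one_ne_zero]
  have hm : Measurable fun x => (gaussianPDFReal a 1 x).toNNReal :=
    (measurable_gaussianPDFReal a 1).real_toNNReal
  have : (gaussianPDF a 1) = fun x => ((gaussianPDFReal a 1 x).toNNReal : ℝ≥0∞) := by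
    funext x; rfl
  rw [this, integrable_withDensity_iff_integrable_smul hm]
  have : (fun x => (gaussianPDFReal a 1 x).toNNReal • Real.exp (x + c))
      = fun x => (Real.exp (a + 1/2) * Real.exp c) * gaussianPDFReal (a+1) 1 x := by
    funext x
    rw [NNReal.smul_def, smul_eq_mul, Real.coe_toNNReal _ (gaussianPDFReal_nonneg a 1 x)]
    rw [Real.exp_add, show gaussianPDFReal a 1 x * (rexp x * rexp c)
      = rexp c * (rexp x * gaussianPDFReal a 1 x) by ring, gauss_pdf_shift]
    ring
  rw [this]
  exact (integrable_gaussianPDFReal (a+1) 1).const_mul _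

lemma integral_exp_add_gauss (a c : ℝ) :
    ∫ x, Real.exp (x + c) ∂(gaussianReal a 1) = Real.exp (a + 1/2 + c) := by
  rw [gaussianReal_of_var_ne_zero a one_ne_zero]
  have hm : Measurable fun x => (gaussianPDFReal a 1 x).toNNReal :=
    (measurable_gaussianPDFReal a 1).real_toNNReal
  have h1 : (gaussianPDF a 1) = fun x => ((gaussianPDFReal a 1 x).toNNReal : ℝ≥0∞) := by
    funext x; rfl
  rw [h1, integral_withDensity_eq_integral_smul hm]
  have : (fun x => ((gaussianPDFReal a 1 x).toNNReal : ℝ≥0) • Real.exp (x + c))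
      = fun x => (Real.exp (a + 1/2) * Real.exp c) * gaussianPDFReal (a+1) 1 x := by
    funext x
    rw [NNReal.smul_def, smul_eq_mul, Real.coe_toNNReal _ (gaussianPDFReal_nonneg a 1 x)]
    rw [Real.exp_add, show gaussianPDFReal a 1 x * (rexp x * rexp c)
      = rexp c * (rexp x * gaussianPDFReal a 1 x) by ring, gauss_pdf_shift]
    ring
  rw [this, integral_const_mul, integral_gaussianPDFReal_eq_one (a+1) one_ne_zero, mul_one,
    ← Real.exp_add]


lemma super_maximal {Ω : Type*} {m0 : MeasurableSpace Ω} {μ : Measure Ω} [IsProbabilityMeasure μ]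
    {𝒢 : Filtration ℕ m0} {f : ℕ → Ω → ℝ} (hf : Supermartingale f 𝒢 μ)
    (hnonneg : ∀ n ω, 0 ≤ f n ω) {ε : ℝ≥0} (n : ℕ) :
    (ε : ℝ≥0∞) * μ {ω | (ε : ℝ) ≤ (range (n + 1)).sup' nonempty_range_add_one fun k => f k ω} ≤
      ENNReal.ofReal (∫ ω, f 0 ω ∂μ) := by
  set τ : Ω → ℕ∞ := fun ω => (hittingBtwn f {y : ℝ | (ε : ℝ) ≤ y} 0 n ω : ℕ) with hτdef
  have hτ : IsStoppingTime 𝒢 τ :=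
    hf.stronglyAdapted.adapted.isStoppingTime_hittingBtwn measurableSet_Ici
  have hτle : ∀ ω, τ ω ≤ n := fun ω =>
    Nat.cast_le.2 (hittingBtwn_le (u := f) (s := {y : ℝ | (ε : ℝ) ≤ y}) (n := 0) ω)
  have hint : Integrable (stoppedValue f τ) μ := by
    have := (hf.neg.integrable_stoppedValue hτ hτle)
    have h2 : stoppedValue (-f) τ = -stoppedValue f τ := by
      funext ω; simp [stoppedValue]
    rw [h2] at this
    simpa using this.neg
  have hsv_nonneg : ∀ ω, 0 ≤ stoppedValue f τ ω := fun ω => hnonneg _ _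
  -- step 1 : ε * μ E ≤ ∫_E stoppedValue
  have hE : ∀ ω, ((ε : ℝ) ≤ (range (n + 1)).sup' nonempty_range_add_one fun k => f k ω) →
      (ε : ℝ) ≤ stoppedValue f τ ω := by
    intro x hx
    simp_rw [le_sup'_iff, mem_range, Nat.lt_succ_iff] at hx
    refine stoppedValue_hittingBtwn_mem ?_
    simp only [Set.mem_setOf_eq, Set.mem_Icc]
    obtain ⟨j, hj₁, hj₂⟩ := hx
    exact ⟨j, ⟨Nat.zero_le _, hj₁⟩, hj₂⟩
  have hmeasE : MeasurableSet {ω | (ε : ℝ) ≤ (range (n + 1)).sup' nonempty_range_add_one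
      fun k => f k ω} :=
    measurableSet_le measurable_const
      (Finset.measurable_range_sup'' fun k _ => (hf.stronglyMeasurable k).measurable.le (𝒢.le k))
  have h1 := setIntegral_ge_of_const_le_real hmeasE (measure_ne_top _ _) hE hint.integrableOn
  -- step 2 : ∫_E sv ≤ ∫ sv
  have h2 : ∫ ω in {ω | (ε : ℝ) ≤ (range (n + 1)).sup' nonempty_range_add_one fun k => f k ω},
      stoppedValue f τ ω ∂μ ≤ ∫ ω, stoppedValue f τ ω ∂μ :=
    setIntegral_le_integral hint (Filter.Eventually.of_forall hsv_nonneg)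
  -- step 3 : ∫ sv ≤ ∫ f 0 (optional stopping for supermartingale)
  have h3 : ∫ ω, stoppedValue f τ ω ∂μ ≤ ∫ ω, f 0 ω ∂μ := by
    have := hf.neg.expected_stoppedValue_mono
      (isStoppingTime_const 𝒢 0) hτ (fun ω => by change ((0 : ℕ) : ℕ∞) ≤ _; simp) hτle
    have e1 : stoppedValue (-f) (fun _ => ((0 : ℕ) : WithTop ℕ)) = -f 0 := by funext ω; rfl
    have e2 : stoppedValue (-f) τ = -stoppedValue f τ := by funext ω; simp [stoppedValue]
    erw [e1, e2] at this
    simp only [Pi.neg_apply] at this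
    rw [integral_neg, integral_neg, neg_le_neg_iff] at this
    exact this
  rw [ENNReal.le_ofReal_iff_toReal_le (ENNReal.mul_ne_top (by simp) (measure_ne_top _ _))
    (integral_nonneg fun ω => hnonneg 0 ω)]
  calc ((ε : ℝ≥0∞) * μ _).toReal = (ε : ℝ) * (μ _).toReal := by
        rw [ENNReal.toReal_mul]; simp
    _ ≤ _ := le_trans h1 (le_trans h2 h3)

/-- Example 1: Gaussian non-homogeneous model.
Random variables are 1-indexed (index `0` unused): `Y n ∼ N(a n, 1)` for `n ≥ 1`,
mutually independent, with `a 1 + a 2 = −1` and `a n + a (n+1) ≤ −1` for all `n ≥ 1`;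
`S k = Y_1 + ⋯ + Y_k = ∑_{j=1}^{k} Y j`.  Then for every `u > 0`:
`P[sup_{k≥1} S_k > u] ≤ e^{max(a_1 + 1/2, 0)} · e^{-u}`. -/
theorem stmt17 {Ω : Type*} [MeasurableSpace Ω] (P : Measure Ω) [IsProbabilityMeasure P]
    (Y : ℕ → Ω → ℝ)
    (hmeas : ∀ i, Measurable (Y i))
    (hindep : iIndepFun (fun k : ℕ => Y (k + 1)) P)
    (a : ℕ → ℝ)
    (hgauss : ∀ n : ℕ, 1 ≤ n → Measure.map (Y n) P = gaussianReal (a n) 1)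
    (ha12 : a 1 + a 2 = -1)
    (ha : ∀ n : ℕ, 1 ≤ n → a n + a (n + 1) ≤ -1)
    (S : ℕ → Ω → ℝ) (hS : ∀ k ω, S k ω = ∑ j ∈ Finset.Icc 1 k, Y j ω)
    (u : ℝ) (hu : 0 < u) :
    P (⋃ k : ℕ, {ω | u < S (k + 1) ω}) ≤
      ENNReal.ofReal (Real.exp (max (a 1 + 1 / 2) 0) * Real.exp (-u)) := by
  classical
  set b0 : ℝ := max (a 1 + 1 / 2) 0 with hb0def
  set A : ℕ → ℝ := fun k => ∑ j ∈ Finset.Icc 1 k, a j with hAdef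
  set b : ℕ → ℝ := fun k => b0 - A k - k / 2 with hbdef
  have hArec : ∀ k : ℕ, A (k + 1) = A k + a (k + 1) := by
    intro k
    simp only [hAdef]
    rw [Finset.sum_Icc_succ_top (Nat.succ_le_succ (Nat.zero_le k))]
  have hA0 : A 0 = 0 := by simp [hAdef]
  have hA1 : A 1 = a 1 := by simp [hAdef]
  have hApair : ∀ m : ℕ, A (2 * m) ≤ -(m : ℝ) ∧ A (2 * m + 1) ≤ a 1 - m := by
    intro m
    induction m with
    | zero => simp [hA0, hA1]
    | succ m ih =>
      obtain ⟨ih1, ih2⟩ := ih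
      have t1 := hArec (2 * m)
      have t2 := hArec (2 * m + 1)
      have t3 := hArec (2 * m + 2)
      rw [show 2 * m + 1 + 1 = 2 * m + 2 by omega] at t2
      rw [show 2 * m + 2 + 1 = 2 * m + 3 by omega] at t3
      have h1 := ha (2 * m + 1) (by omega)
      rw [show 2 * m + 1 + 1 = 2 * m + 2 by omega] at h1
      have h2 := ha (2 * m + 2) (by omega)
      rw [show 2 * m + 2 + 1 = 2 * m + 3 by omega] at h2
      constructor
      · rw [show 2 * (m + 1) = 2 * m + 2 by omega]
        push_cast
        linarith
      · rw [show 2 * (m + 1) + 1 = 2 * m + 3 by omega]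
        push_cast
        linarith
  have hb0nonneg : 0 ≤ b0 := le_max_right _ _
  have hb0ge : a 1 + 1 / 2 ≤ b0 := le_max_left _ _
  have hbnonneg : ∀ k, 0 ≤ b k := by
    intro k
    rcases Nat.even_or_odd k with ⟨m, hm⟩ | ⟨m, hm⟩
    · have h := (hApair m).1
      have hm' : k = 2 * m := by omega
      subst hm'
      simp only [hbdef]
      push_cast
      linarith
    · have h := (hApair m).2
      have hm' : k = 2 * m + 1 := by omega
      subst hm'
      simp only [hbdef]
      push_cast
      linarith
  have hbrec : ∀ k : ℕ, b (k + 1) = b k - a (k + 1) - 1 / 2 := by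
    intro k
    simp only [hbdef, hArec k]
    push_cast
    ring
  -- sums of Y
  have hSsum : ∀ (n : ℕ) (ω : Ω), S (n + 1) ω = ∑ k ∈ Finset.range (n + 1), Y (k + 1) ω := by
    intro n
    induction n with
    | zero => intro ω; rw [hS]; simp
    | succ n ih =>
      intro ω
      rw [hS, Finset.sum_Icc_succ_top (Nat.succ_le_succ (Nat.zero_le (n + 1))),
        ← hS (n + 1) ω, ih ω]
      exact (Finset.sum_range_succ _ (n + 1)).symm
  -- the supermartingale
  set W : ℕ → Ω → ℝ := fun n ω => Real.exp (S (n + 1) ω + b (n + 1)) with hWdef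
  set V : ℕ → Ω → ℝ := fun n ω => ∏ k ∈ Finset.range (n + 1), Real.exp (Y (k + 1) ω) with hVdef
  have hWV : ∀ n ω, W n ω = Real.exp (b (n + 1)) * V n ω := by
    intro n ω
    simp only [hWdef, hVdef]
    rw [hSsum n ω, Real.exp_add, ← Real.exp_sum]
    ring
  -- integral facts for single variables
  have hYint : ∀ (n : ℕ), 1 ≤ n → ∀ c : ℝ, Integrable (fun ω => Real.exp (Y n ω + c)) P := by
    intro n hn c
    have hg : AEStronglyMeasurable (fun x : ℝ => Real.exp (x + c)) (Measure.map (Y n) P) :=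
      (measurable_exp.comp (measurable_id.add_const c)).aestronglyMeasurable
    have h : Integrable (fun x => Real.exp (x + c)) (Measure.map (Y n) P) := by
      rw [hgauss n hn]; exact integrable_exp_add_gauss _ _
    rw [integrable_map_measure hg (hmeas n).aemeasurable] at h
    exact h
  have hYval : ∀ (n : ℕ), 1 ≤ n → ∀ c : ℝ,
      ∫ ω, Real.exp (Y n ω + c) ∂P = Real.exp (a n + 1 / 2 + c) := by
    intro n hn c
    have hg : AEStronglyMeasurable (fun x : ℝ => Real.exp (x + c)) (Measure.map (Y n) P) :=
      (measurable_exp.comp (measurable_id.add_const c)).aestronglyMeasurable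
    have h := integral_map (hmeas n).aemeasurable hg
    rw [hgauss n hn, integral_exp_add_gauss] at h
    exact h.symm
  -- independence of exponentials
  have hexpindep : iIndepFun
      (fun k : ℕ => (fun ω => Real.exp (Y (k + 1) ω))) P := by
    have := hindep.comp (fun _ : ℕ => Real.exp) fun _ => Real.measurable_exp
    exact this
  have hVindep : ∀ n : ℕ, IndepFun (V n) (fun ω => Real.exp (Y (n + 2) ω)) P := by
    intro n
    have := hexpindep.indepFun_prod_range_succ
      (fun k => Real.measurable_exp.comp (hmeas (k + 1))) (n + 1)
    have hprod : (∏ j ∈ Finset.range (n + 1), fun ω => Real.exp (Y (j + 1) ω)) = V n := by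
      funext ω; simp [hVdef]
    rwa [hprod] at this
  -- integrability and integral of V
  have hV : ∀ n, Integrable (V n) P ∧
      ∫ ω, V n ω ∂P = Real.exp (A (n + 1) + (n + 1) / 2) := by
    intro n
    induction n with
    | zero =>
      have h0 : V 0 = fun ω => Real.exp (Y 1 ω + 0) := by
        funext ω; simp [hVdef]
      constructor
      · rw [h0]; exact hYint 1 le_rfl 0
      · rw [h0, hYval 1 le_rfl 0, hA1]; norm_num
    | succ n ih =>
      obtain ⟨ih1, ih2⟩ := ih
      have hsucc : V (n + 1) = V n * fun ω => Real.exp (Y (n + 2) ω) := by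
        funext ω
        simp only [hVdef, Pi.mul_apply]
        rw [Finset.prod_range_succ]
      have hint2 : Integrable (fun ω => Real.exp (Y (n + 2) ω)) P := by
        have := hYint (n + 2) (by omega) 0
        simpa using this
      constructor
      · rw [hsucc]
        exact (hVindep n).integrable_mul ih1 hint2
      · rw [hsucc, (hVindep n).integral_mul_eq_mul_integral ih1.aestronglyMeasurable hint2.aestronglyMeasurable,
          ih2]
        have : ∫ ω, Real.exp (Y (n + 2) ω) ∂P = Real.exp (a (n + 2) + 1 / 2 + 0) := by
          rw [← hYval (n + 2) (by omega) 0]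
          simp
        rw [this, ← Real.exp_add, hArec (n + 1)]
        push_cast
        ring_nf
  have hWint : ∀ n, Integrable (W n) P := by
    intro n
    have : W n = fun ω => Real.exp (b (n + 1)) * V n ω := by funext ω; exact hWV n ω
    rw [this]
    exact (hV n).1.const_mul _
  have hWval : ∫ ω, W 0 ω ∂P = Real.exp b0 := by
    have : W 0 = fun ω => Real.exp (b 1) * V 0 ω := by funext ω; exact hWV 0 ω
    have hb1 : b 1 = b0 - a 1 - 1 / 2 := by
      simp only [hbdef]
      rw [hA1]
      norm_num
    rw [this, integral_const_mul, (hV 0).2, ← Real.exp_add]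
    congr 1
    rw [hb1, hA1]
    push_cast
    ring
  -- filtration
  set 𝒢 : Filtration ℕ _ := Filtration.natural (fun k : ℕ => Y (k + 1))
    (fun k => (hmeas (k + 1)).stronglyMeasurable) with h𝒢def
  have hadp : StronglyAdapted 𝒢 W := by
    intro n
    have hsm : ∀ k, k ≤ n → StronglyMeasurable[𝒢 n] (Y (k + 1)) := fun k hk =>
      (Filtration.stronglyAdapted_natural (fun k => (hmeas (k + 1)).stronglyMeasurable) k).mono
        (𝒢.mono hk)
    have hsum : StronglyMeasurable[𝒢 n]
        (fun ω => (∑ k ∈ Finset.range (n + 1), Y (k + 1) ω) + b (n + 1)) := by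
      apply StronglyMeasurable.add_const
      apply Finset.stronglyMeasurable_fun_sum
      intro k hk
      exact hsm k (by simp at hk; omega)
    have : W n = fun ω => Real.exp ((∑ k ∈ Finset.range (n + 1), Y (k + 1) ω) + b (n + 1)) := by
      funext ω; simp only [hWdef]; rw [hSsum n ω]
    rw [this]
    exact Real.continuous_exp.comp_stronglyMeasurable hsum
  -- supermartingale property
  have hcond : ∀ n, P[W (n + 1)|𝒢 n] ≤ᵐ[P] W n := by
    intro n
    set Z : Ω → ℝ := fun ω => Real.exp (Y (n + 2) ω + (-a (n + 2) - 1 / 2)) with hZdef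
    have hmul : W (n + 1) = W n * Z := by
      funext ω
      simp only [hWdef, hZdef, Pi.mul_apply]
      rw [← Real.exp_add]
      congr 1
      have h1 : S (n + 2) ω = S (n + 1) ω + Y (n + 2) ω := by
        rw [hSsum (n + 1) ω, Finset.sum_range_succ, ← hSsum n ω]
      have h2 := hbrec (n + 1)
      rw [h1, h2]
      ring
    have hZint : Integrable Z P := hYint (n + 2) (by omega) _
    have hZmeas : StronglyMeasurable[MeasurableSpace.comap (Y (n + 2)) inferInstance] Z := by
      apply Measurable.stronglyMeasurable
      exact measurable_exp.comp ((comap_measurable (Y (n + 2))).add_const _)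
    have hindep2 : Indep (MeasurableSpace.comap (Y (n + 2)) inferInstance) (𝒢 n) P :=
      iIndepFun.indep_comap_natural_of_lt (f := fun k : ℕ => Y (k + 1))
        (fun k => (hmeas (k + 1)).stronglyMeasurable) hindep (Nat.lt_succ_self n)
    have h2 : P[Z|𝒢 n] =ᵐ[P] fun _ => ∫ ω, Z ω ∂P :=
      condExp_indep_eq (hmeas (n + 2)).comap_le (𝒢.le n) hZmeas hindep2
    have hZval : ∫ ω, Z ω ∂P = 1 := by
      rw [hZdef, hYval (n + 2) (by omega) _]
      norm_num
    have h1 : P[W (n + 1)|𝒢 n] =ᵐ[P] W n * P[Z|𝒢 n] := by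
      rw [hmul]
      exact condExp_mul_of_stronglyMeasurable_left (hadp n) (hmul ▸ hWint (n + 1)) hZint
    filter_upwards [h1, h2] with ω hω1 hω2
    rw [hω1, Pi.mul_apply, hω2, hZval, mul_one]
  have hsuper : Supermartingale W 𝒢 P :=
    supermartingale_nat hadp hWint hcond
  -- final assembly
  set ε : ℝ≥0 := (Real.exp u).toNNReal with hεdef
  have hε : (ε : ℝ) = Real.exp u := Real.coe_toNNReal _ (Real.exp_pos u).le
  set B : ℕ → Set Ω := fun n =>
    {ω | (ε : ℝ) ≤ (range (n + 1)).sup' nonempty_range_add_one fun k => W k ω} with hBdef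
  have hBmono : Monotone B := by
    intro n m hnm ω hω
    simp only [hBdef, Set.mem_setOf_eq] at hω ⊢
    exact le_trans hω (Finset.sup'_mono _ (Finset.range_subset_range.2 (by omega)) _)
  have hsub : (⋃ k : ℕ, {ω | u < S (k + 1) ω}) ⊆ ⋃ n, B n := by
    intro ω hω
    obtain ⟨k, hk⟩ := Set.mem_iUnion.1 hω
    refine Set.mem_iUnion.2 ⟨k, ?_⟩
    simp only [hBdef, Set.mem_setOf_eq]
    refine le_trans ?_ (Finset.le_sup' (fun j => W j ω) (Finset.self_mem_range_succ k))
    simp only [hWdef]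
    rw [hε]
    apply Real.exp_le_exp.2
    have := hbnonneg (k + 1)
    have hk' : u < S (k + 1) ω := hk
    linarith
  have hmax : ∀ n, P (B n) ≤ ENNReal.ofReal (Real.exp b0 * Real.exp (-u)) := by
    intro n
    have h := super_maximal hsuper (fun n ω => (Real.exp_pos _).le) (ε := ε) n
    rw [hWval] at h
    have hεne : (ε : ℝ≥0∞) ≠ 0 := by
      simp only [ne_eq, ENNReal.coe_eq_zero]
      intro hc
      rw [hc] at hε
      simp at hε
      exact absurd hε.symm (Real.exp_pos u).ne'
    have hεnetop : (ε : ℝ≥0∞) ≠ ⊤ := ENNReal.coe_ne_top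
    have hdiv : P (B n) ≤ ENNReal.ofReal (Real.exp b0) / (ε : ℝ≥0∞) := by
      rw [ENNReal.le_div_iff_mul_le (Or.inl hεne) (Or.inl hεnetop), mul_comm]
      exact h
    have hcoe : (ε : ℝ≥0∞) = ENNReal.ofReal (Real.exp u) := by
      rw [hεdef]; rfl
    rw [hcoe, ← ENNReal.ofReal_div_of_pos (Real.exp_pos u)] at hdiv
    refine hdiv.trans (le_of_eq ?_)
    congr 1
    rw [Real.exp_neg, div_eq_mul_inv]
  calc P (⋃ k : ℕ, {ω | u < S (k + 1) ω}) ≤ P (⋃ n, B n) := measure_mono hsub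
    _ = ⨆ n, P (B n) := Directed.measure_iUnion (hBmono.directed_le)
    _ ≤ ENNReal.ofReal (Real.exp b0 * Real.exp (-u)) := iSup_le hmax
end

section
/- Let Y_1, Y_2, … be mutually independent random variables with P[Y_n = 1] = 1/(n+1) and P[Y_n = −1] = n/(n+1) for each n ≥ 1, and set S_k = Y_1 + ⋯ + Y_k. Then (a) for all h > 0 and u > 0: P[sup_{k≥1} S_k > u] ≤ exp(−hu + h e^{h}), and (b) for every u > 2: P[sup_{k≥1} S_k > u] ≤ (2/u)^{u/2}. -/
open MeasureTheory ProbabilityTheory ENNReal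


open MeasureTheory ProbabilityTheory ENNReal Finset



/-- factor bound: each factor is at most `e^h` -/
lemma cr_le (h : ℝ) (hh : 0 < h) (i : ℕ) :
    (Real.exp h + (i+1) * Real.exp (-h)) / (i+2) ≤ Real.exp h := by
  rw [div_le_iff₀ (by positivity)]
  have h1 : Real.exp (-h) ≤ Real.exp h := Real.exp_le_exp.2 (by linarith)
  nlinarith [Real.exp_pos h, Real.exp_pos (-h)]

lemma cr_pos (h : ℝ) (i : ℕ) : 0 < (Real.exp h + (i+1) * Real.exp (-h)) / (i+2) := by
  positivity

/-- factor bound: for `i+1 ≥ e^h` the factor is at most 1 -/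
lemma cr_le_one (h : ℝ) (hh : 0 < h) (i : ℕ) (hi : Real.exp h ≤ (i:ℝ)+1) :
    (Real.exp h + (i+1) * Real.exp (-h)) / (i+2) ≤ 1 := by
  rw [div_le_one (by positivity)]
  have h2 : Real.exp (-h) = (Real.exp h)⁻¹ := Real.exp_neg h
  have h3 : 1 < Real.exp h := by
    rw [← Real.exp_zero]; exact Real.exp_lt_exp.2 hh
  have h5 : Real.exp h > 0 := Real.exp_pos h
  rw [h2]
  nlinarith [mul_pos h5 h5, inv_pos.2 h5, mul_inv_cancel₀ (ne_of_gt h5)]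

lemma prod_cr_le (h : ℝ) (hh : 0 < h) (K : ℕ) :
    ∏ i ∈ range K, (Real.exp h + (i+1) * Real.exp (-h)) / (i+2) ≤ Real.exp (h * Real.exp h) := by
  set M : ℕ := ⌊Real.exp h⌋₊ with hM
  have key : ∀ K : ℕ, ∏ i ∈ range K, (Real.exp h + (i+1) * Real.exp (-h)) / (i+2)
      ≤ Real.exp (h * (min K M)) := by
    intro K
    induction K with
    | zero => simp
    | succ K ih =>
      rw [Finset.prod_range_succ]
      by_cases hKM : K < M
      · have hmin : (min (K+1) M : ℕ) = min K M + 1 := by omega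
        rw [hmin]
        rw [Nat.cast_add, Nat.cast_one]
        have he : h * ((min K M : ℕ) + 1) = h * (min K M : ℕ) + h := by ring
        rw [he, Real.exp_add]
        exact mul_le_mul ih (cr_le h hh K) (le_of_lt (cr_pos h K)) (Real.exp_pos _).le
      · have hmin : min (K+1) M = min K M := by omega
        rw [hmin]
        have hMK : M ≤ K := by omega
        have hKe : Real.exp h ≤ (K:ℝ) + 1 := by
          have h1 : Real.exp h < (M:ℝ) + 1 := Nat.lt_floor_add_one _
          have h2 : (M:ℝ) ≤ (K:ℝ) := by exact_mod_cast hMK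
          linarith
        calc (∏ i ∈ range K, (Real.exp h + (i+1) * Real.exp (-h)) / (i+2))
              * ((Real.exp h + (K+1) * Real.exp (-h)) / (K+2))
            ≤ Real.exp (h * (min K M)) * 1 :=
              mul_le_mul ih (cr_le_one h hh K hKe)
                (le_of_lt (cr_pos h K)) (Real.exp_pos _).le
          _ = Real.exp (h * (min K M)) := by ring
  calc ∏ i ∈ range K, (Real.exp h + (i+1) * Real.exp (-h)) / (i+2)
      ≤ Real.exp (h * (min K M)) := key K
    _ ≤ Real.exp (h * Real.exp h) := by
        apply Real.exp_le_exp.2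
        apply mul_le_mul_of_nonneg_left _ hh.le
        calc ((min K M : ℕ) : ℝ) ≤ (M:ℝ) := by exact_mod_cast Nat.min_le_right K M
          _ ≤ Real.exp h := Nat.floor_le (Real.exp_pos h).le


lemma twopoint {Ω : Type*} [MeasurableSpace Ω] (P : Measure Ω)
    (Z : Ω → ℝ) (hZ : Measurable Z) (hv : ∀ ω, Z ω = 1 ∨ Z ω = -1)
    (f : ℝ → ℝ≥0∞) :
    ∫⁻ ω, f (Z ω) ∂P = f 1 * P {ω | Z ω = 1} + f (-1) * P {ω | Z ω = -1} := by
  have hA : MeasurableSet {ω | Z ω = 1} := hZ (measurableSet_singleton 1)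
  have hcompl : {ω | Z ω = 1}ᶜ = {ω | Z ω = -1} := by
    ext ω
    simp only [Set.mem_compl_iff, Set.mem_setOf_eq]
    rcases hv ω with h | h <;> simp [h] <;> norm_num
  rw [← lintegral_add_compl (fun ω => f (Z ω)) hA, hcompl]
  have h1 : ∫⁻ ω in {ω | Z ω = 1}, f (Z ω) ∂P = f 1 * P {ω | Z ω = 1} := by
    rw [setLIntegral_congr_fun hA (fun ω (hω : Z ω = 1) => by rw [hω]),
      setLIntegral_const]
  have h2 : ∫⁻ ω in {ω | Z ω = -1}, f (Z ω) ∂P = f (-1) * P {ω | Z ω = -1} := by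
    have hB : MeasurableSet {ω | Z ω = -1} := hZ (measurableSet_singleton (-1))
    rw [setLIntegral_congr_fun hB (fun ω (hω : Z ω = -1) => by rw [hω]),
      setLIntegral_const]
  rw [h1, h2]


lemma indep_prod_single {Ω : Type*} [MeasurableSpace Ω] {P : Measure Ω}
    (X : ℕ → Ω → ℝ) (hmeas : ∀ i, Measurable (X i))
    (hindep : iIndepFun X P)
    (g : ℕ → ℝ → ℝ≥0∞) (hg : ∀ i, Measurable (g i)) (s : Finset ℕ) (a : ℕ) (ha : a ∉ s) :
    IndepFun (fun ω => g a (X a ω)) (fun ω => ∏ i ∈ s, g i (X i ω)) P := by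
  classical
  have base := hindep.indepFun_finset {a} s (Finset.disjoint_singleton_left.mpr ha) hmeas
  have hφ : Measurable (fun v : (↥({a}:Finset ℕ) → ℝ) => g a (v ⟨a, Finset.mem_singleton_self a⟩)) :=
    (hg a).comp (measurable_pi_apply _)
  have hψ : Measurable (fun v : (↥s → ℝ) => ∏ i ∈ s.attach, g i (v i)) :=
    Finset.measurable_prod _ fun i _ => (hg i).comp (measurable_pi_apply _)
  have := base.comp hφ hψ
  have heq : (fun ω => ∏ i ∈ s, g i (X i ω))
      = (fun v : (↥s → ℝ) => ∏ i ∈ s.attach, g i (v i)) ∘ (fun ω (i : s) => X i ω) := by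
    funext ω
    exact (Finset.prod_attach s fun i => g i (X i ω)).symm
  rw [heq]
  exact this

lemma lintegral_prod_indep {Ω : Type*} [MeasurableSpace Ω] (P : Measure Ω) [IsProbabilityMeasure P]
    (X : ℕ → Ω → ℝ) (hmeas : ∀ i, Measurable (X i))
    (hindep : iIndepFun X P)
    (g : ℕ → ℝ → ℝ≥0∞) (hg : ∀ i, Measurable (g i)) (s : Finset ℕ) :
    ∫⁻ ω, ∏ i ∈ s, g i (X i ω) ∂P = ∏ i ∈ s, ∫⁻ ω, g i (X i ω) ∂P := by
  classical
  induction s using Finset.induction_on with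
  | empty => simp
  | insert a s ha ih =>
    simp only [Finset.prod_insert ha]
    rw [← ih]
    exact lintegral_mul_eq_lintegral_mul_lintegral_of_indepFun''
      ((hg a).comp (hmeas a)).aemeasurable
      (Finset.measurable_prod s (fun i _ => (hg i).comp (hmeas i))).aemeasurable
      (indep_prod_single X hmeas hindep g hg s a ha)


section
variable {Ω : Type*} [MeasurableSpace Ω] {P : Measure Ω}
  (X : ℕ → Ω → ℝ)

/-- partial-sum functional on a tuple indexed by `range (k+1)` -/
noncomputable def ps (k : ℕ) (v : ↥(Finset.range (k+1)) → ℝ) (n : ℕ) : ℝ :=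
  ∑ i ∈ (Finset.range (k+1)).attach, if (i:ℕ) < n then v i else 0

lemma ps_eq (k n : ℕ) (hn : n ≤ k+1) (ω : Ω) :
    ps k (fun i : ↥(Finset.range (k+1)) => X i ω) n = ∑ i ∈ Finset.range n, X i ω := by
  unfold ps
  rw [Finset.sum_attach (Finset.range (k+1)) (fun i => if i < n then X i ω else 0)]
  rw [Finset.sum_ite, Finset.sum_const_zero, add_zero]
  congr 1
  ext i
  simp only [Finset.mem_filter, Finset.mem_range]
  omega

lemma ps_meas (k n : ℕ) : Measurable (fun v => ps k v n) := by
  unfold ps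
  apply Finset.measurable_sum
  intro i _
  by_cases hi : (i:ℕ) < n
  · simpa [hi] using measurable_pi_apply i
  · simp [hi]

lemma indep_stopped (hmeas : ∀ i, Measurable (X i))
    (hindep : iIndepFun X P)
    (h u : ℝ) (k N : ℕ) :
    IndepFun
      (fun ω => Set.indicator
        {ω | u < ∑ i ∈ Finset.range (k+1), X i ω ∧
             ∀ j < k, ∑ i ∈ Finset.range (j+1), X i ω ≤ u}
        (fun ω => ENNReal.ofReal (Real.exp (h * ∑ i ∈ Finset.range (k+1), X i ω))) ω)
      (fun ω => ∏ i ∈ Finset.Ico (k+1) N, ENNReal.ofReal (Real.exp (h * X i ω))) P := by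
  classical
  have disj : Disjoint (Finset.range (k+1)) (Finset.Ico (k+1) N) := by
    simp only [Finset.disjoint_left, Finset.mem_range, Finset.mem_Ico]
    omega
  have base := hindep.indepFun_finset (Finset.range (k+1)) (Finset.Ico (k+1) N) disj hmeas
  set φ : (↥(Finset.range (k+1)) → ℝ) → ℝ≥0∞ := fun v =>
    Set.indicator {v | u < ps k v (k+1) ∧ ∀ j < k, ps k v (j+1) ≤ u}
      (fun v => ENNReal.ofReal (Real.exp (h * ps k v (k+1)))) v with hφdef
  set ψ : (↥(Finset.Ico (k+1) N) → ℝ) → ℝ≥0∞ := fun v =>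
    ∏ i ∈ (Finset.Ico (k+1) N).attach, ENNReal.ofReal (Real.exp (h * v i)) with hψdef
  have hφ : Measurable φ := by
    apply Measurable.indicator
    · exact ENNReal.measurable_ofReal.comp
        (Real.measurable_exp.comp (measurable_const.mul (ps_meas k (k+1))))
    · have hset : {v : ↥(Finset.range (k+1)) → ℝ |
          u < ps k v (k+1) ∧ ∀ j < k, ps k v (j+1) ≤ u}
          = {v | u < ps k v (k+1)} ∩ ⋂ j ∈ Set.Iio k, {v | ps k v (j+1) ≤ u} := by
        ext v; simp [Set.mem_iInter]
      rw [hset]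
      exact (measurableSet_lt measurable_const (ps_meas k (k+1))).inter
        (MeasurableSet.biInter (Set.to_countable _)
          fun j _ => measurableSet_le (ps_meas k (j+1)) measurable_const)
  have hψ : Measurable ψ := by
    apply Finset.measurable_prod
    intro i _
    exact ENNReal.measurable_ofReal.comp
      (Real.measurable_exp.comp (measurable_const.mul (measurable_pi_apply i)))
  have hcomp := base.comp hφ hψ
  have heqF : (fun ω => Set.indicator
        {ω | u < ∑ i ∈ Finset.range (k+1), X i ω ∧
             ∀ j < k, ∑ i ∈ Finset.range (j+1), X i ω ≤ u}
        (fun ω => ENNReal.ofReal (Real.exp (h * ∑ i ∈ Finset.range (k+1), X i ω))) ω)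
      = φ ∘ (fun ω (i : ↥(Finset.range (k+1))) => X i ω) := by
    funext ω
    simp only [Function.comp_apply, hφdef, Set.indicator_apply, Set.mem_setOf_eq]
    have e1 := ps_eq X k (k+1) le_rfl ω
    have hmem : (∀ j < k, ps k (fun i : ↥(Finset.range (k+1)) => X i ω) (j+1) ≤ u)
        ↔ (∀ j < k, ∑ i ∈ Finset.range (j+1), X i ω ≤ u) := by
      constructor <;> intro hj j hjk <;>
        [ rw [← ps_eq X k (j+1) (by omega) ω]; rw [ps_eq X k (j+1) (by omega) ω] ] <;>
        exact hj j hjk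
    simp only [e1, hmem]
  have heqG : (fun ω => ∏ i ∈ Finset.Ico (k+1) N, ENNReal.ofReal (Real.exp (h * X i ω)))
      = ψ ∘ (fun ω (i : ↥(Finset.Ico (k+1) N)) => X i ω) := by
    funext ω
    simp only [Function.comp_apply, hψdef]
    exact (Finset.prod_attach _ fun i => ENNReal.ofReal (Real.exp (h * X i ω))).symm
  rw [heqF, heqG]
  exact hcomp

end

section Main

open MeasureTheory ProbabilityTheory ENNReal Finset

variable {Ω : Type*} [MeasurableSpace Ω] (P : Measure Ω) [IsProbabilityMeasure P]

lemma main_bound (X : ℕ → Ω → ℝ) (hmeas : ∀ i, Measurable (X i))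
    (hindep : iIndepFun X P)
    (hone : ∀ i : ℕ, P {ω | X i ω = 1} = ENNReal.ofReal (((i:ℝ)+2)⁻¹))
    (hmone : ∀ i : ℕ, P {ω | X i ω = -1} = ENNReal.ofReal (((i:ℝ)+1)/((i:ℝ)+2)))
    (hvals : ∀ i ω, X i ω = 1 ∨ X i ω = -1)
    (h u : ℝ) (hh : 0 < h) (hu : 0 < u) (K : ℕ) :
    P (⋃ k ∈ Finset.range (K+1), {ω | u < ∑ i ∈ Finset.range (k+1), X i ω}) ≤
      ENNReal.ofReal (Real.exp (-h * u + h * Real.exp h)) := by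
  classical
  set N := K + 1 with hN
  -- notation
  set g : ℝ → ℝ≥0∞ := fun x => ENNReal.ofReal (Real.exp (h * x)) with hgdef
  have hg : Measurable g := ENNReal.measurable_ofReal.comp
    (Real.measurable_exp.comp (measurable_const.mul measurable_id))
  set A : ℕ → Set Ω := fun k =>
    {ω | u < ∑ i ∈ Finset.range (k+1), X i ω ∧
         ∀ j < k, ∑ i ∈ Finset.range (j+1), X i ω ≤ u} with hAdef
  have hT : ∀ n, Measurable (fun ω => ∑ i ∈ Finset.range n, X i ω) := fun n =>
    Finset.measurable_sum _ fun i _ => hmeas i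
  have hAm : ∀ k, MeasurableSet (A k) := by
    intro k
    have : A k = {ω | u < ∑ i ∈ Finset.range (k+1), X i ω} ∩
        ⋂ j ∈ Set.Iio k, {ω | ∑ i ∈ Finset.range (j+1), X i ω ≤ u} := by
      ext ω; simp [hAdef, Set.mem_iInter]
    rw [this]
    exact (measurableSet_lt measurable_const (hT (k+1))).inter
      (MeasurableSet.biInter (Set.to_countable _)
        fun j _ => measurableSet_le (hT (j+1)) measurable_const)
  set c : ℕ → ℝ≥0∞ := fun i => ∫⁻ ω, g (X i ω) ∂P with hcdef
  set cr : ℕ → ℝ := fun i => (Real.exp h + (i+1) * Real.exp (-h)) / (i+2) with hcrdef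
  have hc : ∀ i, c i = ENNReal.ofReal (cr i) := by
    intro i
    rw [hcdef]
    simp only
    rw [twopoint P (X i) (hmeas i) (hvals i) g, hone i, hmone i]
    rw [hgdef]
    simp only [mul_one, mul_neg_one]
    rw [← ENNReal.ofReal_mul (Real.exp_pos h).le, ← ENNReal.ofReal_mul (Real.exp_pos (-h)).le,
      ← ENNReal.ofReal_add (by positivity) (by positivity)]
    congr 1
    rw [hcrdef]
    have hi2 : (0:ℝ) < (i:ℝ) + 2 := by positivity
    field_simp
  have hcr_pos : ∀ i, 0 < cr i := fun i => cr_pos h i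
  have hprod : ∀ n, ∏ i ∈ Finset.range n, c i = ENNReal.ofReal (∏ i ∈ Finset.range n, cr i) := by
    intro n
    rw [ENNReal.ofReal_prod_of_nonneg fun i _ => (hcr_pos i).le]
    exact Finset.prod_congr rfl fun i _ => hc i
  set C : ℝ≥0∞ := ENNReal.ofReal (Real.exp (h * Real.exp h)) with hCdef
  have hC0 : C ≠ 0 := by
    rw [hCdef]; simp [ENNReal.ofReal_eq_zero, not_le, Real.exp_pos]
  have hCt : C ≠ ⊤ := ENNReal.ofReal_ne_top
  have hprodC : ∀ n, ∏ i ∈ Finset.range n, c i ≤ C := by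
    intro n
    rw [hprod n, hCdef]
    exact ENNReal.ofReal_le_ofReal (prod_cr_le h hh n)
  set D : ℝ≥0∞ := ∏ i ∈ Finset.range N, c i with hDdef
  have hD0 : D ≠ 0 := by
    rw [hDdef, hprod]
    simp only [ne_eq, ENNReal.ofReal_eq_zero, not_le]
    exact Finset.prod_pos fun i _ => hcr_pos i
  have hDt : D ≠ ⊤ := by
    rw [hDdef, hprod]; exact ENNReal.ofReal_ne_top
  -- the full exponential functional
  set H : Ω → ℝ≥0∞ := fun ω => g (∑ i ∈ Finset.range N, X i ω) with hHdef
  have hHprod : ∀ ω, H ω = ∏ i ∈ Finset.range N, g (X i ω) := by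
    intro ω
    rw [hHdef, hgdef]
    simp only
    rw [Finset.mul_sum, Real.exp_sum]
    exact ENNReal.ofReal_prod_of_nonneg fun i _ => (Real.exp_pos _).le
  have hHmeas : Measurable H := hg.comp (hT N)
  have hHint : ∫⁻ ω, H ω ∂P = D := by
    rw [hDdef]
    calc ∫⁻ ω, H ω ∂P = ∫⁻ ω, ∏ i ∈ Finset.range N, g (X i ω) ∂P := by
          exact lintegral_congr fun ω => hHprod ω
      _ = ∏ i ∈ Finset.range N, c i :=
          lintegral_prod_indep P X hmeas hindep (fun _ => g) (fun _ => hg) _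
  -- key per-k estimate
  have key : ∀ k, k < N →
      ENNReal.ofReal (Real.exp (h * u)) * P (A k) * ∏ i ∈ Finset.Ico (k+1) N, c i ≤
        ∫⁻ ω, Set.indicator (A k) H ω ∂P := by
    intro k hk
    set F : Ω → ℝ≥0∞ := fun ω =>
      Set.indicator (A k) (fun ω => g (∑ i ∈ Finset.range (k+1), X i ω)) ω with hFdef
    set G : Ω → ℝ≥0∞ := fun ω => ∏ i ∈ Finset.Ico (k+1) N, g (X i ω) with hGdef
    have hFmeas : Measurable F := (hg.comp (hT (k+1))).indicator (hAm k)
    have hGmeas : Measurable G := Finset.measurable_prod _ fun i _ => hg.comp (hmeas i)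
    have hFG : IndepFun F G P := indep_stopped X hmeas hindep h u k N
    have step1 : ENNReal.ofReal (Real.exp (h * u)) * P (A k) ≤ ∫⁻ ω, F ω ∂P := by
      rw [← lintegral_indicator_const (hAm k) (ENNReal.ofReal (Real.exp (h * u)))]
      apply lintegral_mono
      intro ω
      by_cases hω : ω ∈ A k
      · rw [hFdef]
        simp only [Set.indicator_of_mem hω]
        rw [hgdef]
        exact ENNReal.ofReal_le_ofReal (Real.exp_le_exp.2
          (mul_le_mul_of_nonneg_left hω.1.le hh.le))
      · simp [Set.indicator_of_notMem hω, hFdef]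
    have hGint : ∫⁻ ω, G ω ∂P = ∏ i ∈ Finset.Ico (k+1) N, c i :=
      lintegral_prod_indep P X hmeas hindep (fun _ => g) (fun _ => hg) _
    have step2 : (∫⁻ ω, F ω ∂P) * ∏ i ∈ Finset.Ico (k+1) N, c i
        = ∫⁻ ω, Set.indicator (A k) H ω ∂P := by
      rw [← hGint,
        ← lintegral_mul_eq_lintegral_mul_lintegral_of_indepFun''
          hFmeas.aemeasurable hGmeas.aemeasurable hFG]
      have hgsplit : ∀ ω, g (∑ i ∈ Finset.range N, X i ω)
          = g (∑ i ∈ Finset.range (k+1), X i ω) * ∏ i ∈ Finset.Ico (k+1) N, g (X i ω) := by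
        intro ω
        rw [hgdef]
        simp only
        rw [← Finset.sum_range_add_sum_Ico (fun i => X i ω) (show k+1 ≤ N by omega),
          mul_add, Real.exp_add, ENNReal.ofReal_mul (Real.exp_pos _).le]
        congr 1
        rw [Finset.mul_sum, Real.exp_sum]
        exact ENNReal.ofReal_prod_of_nonneg fun i _ => (Real.exp_pos _).le
      apply lintegral_congr
      intro ω
      by_cases hω : ω ∈ A k
      · rw [hFdef, hGdef]
        simp only [Set.indicator_of_mem hω, hHdef]
        exact (hgsplit ω).symm
      · simp [hFdef, Set.indicator_of_notMem hω]
    calc ENNReal.ofReal (Real.exp (h * u)) * P (A k) * ∏ i ∈ Finset.Ico (k+1) N, c i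
        ≤ (∫⁻ ω, F ω ∂P) * ∏ i ∈ Finset.Ico (k+1) N, c i := mul_le_mul_left step1 _
      _ = ∫⁻ ω, Set.indicator (A k) H ω ∂P := step2
  -- disjointness of the A k
  have hdisj : (↑(Finset.range N) : Set ℕ).PairwiseDisjoint A := by
    have key2 : ∀ k l, k < l → Disjoint (A k) (A l) := by
      intro k l hlt
      rw [Set.disjoint_left]
      intro ω hωk hωl
      exact absurd hωk.1 (not_lt.2 (hωl.2 k hlt))
    intro k _ l _ hkl
    rcases lt_or_gt_of_ne hkl with hlt | hlt
    · exact key2 k l hlt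
    · exact (key2 l k hlt).symm
  -- summing up
  have sum_le : ∑ k ∈ Finset.range N,
      ENNReal.ofReal (Real.exp (h * u)) * P (A k) * ∏ i ∈ Finset.Ico (k+1) N, c i ≤ D := by
    calc ∑ k ∈ Finset.range N,
        ENNReal.ofReal (Real.exp (h * u)) * P (A k) * ∏ i ∈ Finset.Ico (k+1) N, c i
        ≤ ∑ k ∈ Finset.range N, ∫⁻ ω, Set.indicator (A k) H ω ∂P :=
          Finset.sum_le_sum fun k hk => key k (Finset.mem_range.1 hk)
      _ = ∫⁻ ω, ∑ k ∈ Finset.range N, Set.indicator (A k) H ω ∂P :=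
          (lintegral_finset_sum _ fun k _ => hHmeas.indicator (hAm k)).symm
      _ ≤ ∫⁻ ω, H ω ∂P := by
          apply lintegral_mono
          intro ω
          show ∑ k ∈ Finset.range N, (A k).indicator H ω ≤ H ω
          rw [← Finset.indicator_biUnion_apply (Finset.range N) A hdisj ω]
          exact Set.indicator_le_self _ _ ω
      _ = D := hHint
  -- replace the Ico-product by C⁻¹ * D
  have hIco : ∀ k, k < N → C⁻¹ * D ≤ ∏ i ∈ Finset.Ico (k+1) N, c i := by
    intro k hk
    have hsplit : D = (∏ i ∈ Finset.range (k+1), c i) * ∏ i ∈ Finset.Ico (k+1) N, c i :=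
      (Finset.prod_range_mul_prod_Ico c (by omega : k+1 ≤ N)).symm
    calc C⁻¹ * D ≤ C⁻¹ * (C * ∏ i ∈ Finset.Ico (k+1) N, c i) := by
          apply mul_le_mul_right
          rw [hsplit]
          exact mul_le_mul_left (hprodC (k+1)) _
      _ = ∏ i ∈ Finset.Ico (k+1) N, c i := by
          rw [← mul_assoc, ENNReal.inv_mul_cancel hC0 hCt, one_mul]
  have sum_le2 : (∑ k ∈ Finset.range N, P (A k)) *
      (ENNReal.ofReal (Real.exp (h * u)) * (C⁻¹ * D)) ≤ D := by
    rw [Finset.sum_mul]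
    refine le_trans (Finset.sum_le_sum fun k hk => ?_) sum_le
    have hk' := Finset.mem_range.1 hk
    calc P (A k) * (ENNReal.ofReal (Real.exp (h * u)) * (C⁻¹ * D))
        = ENNReal.ofReal (Real.exp (h * u)) * P (A k) * (C⁻¹ * D) := by ring
      _ ≤ ENNReal.ofReal (Real.exp (h * u)) * P (A k) * ∏ i ∈ Finset.Ico (k+1) N, c i :=
          mul_le_mul_right (hIco k hk') _
  -- cancel D and conclude the sum bound
  have hsum_bound : ∑ k ∈ Finset.range N, P (A k) ≤
      ENNReal.ofReal (Real.exp (-h * u + h * Real.exp h)) := by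
    have h1 : (∑ k ∈ Finset.range N, P (A k)) * (ENNReal.ofReal (Real.exp (h * u)) * C⁻¹) * D
        ≤ 1 * D := by
      rw [one_mul]
      calc (∑ k ∈ Finset.range N, P (A k)) * (ENNReal.ofReal (Real.exp (h * u)) * C⁻¹) * D
          = (∑ k ∈ Finset.range N, P (A k)) *
            (ENNReal.ofReal (Real.exp (h * u)) * (C⁻¹ * D)) := by ring
        _ ≤ D := sum_le2
    have h2 : (∑ k ∈ Finset.range N, P (A k)) * (ENNReal.ofReal (Real.exp (h * u)) * C⁻¹) ≤ 1 :=
      (ENNReal.mul_le_mul_iff_left hD0 hDt).1 h1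
    have h3 : (∑ k ∈ Finset.range N, P (A k)) ≤
        (ENNReal.ofReal (Real.exp (h * u)) * C⁻¹)⁻¹ := ENNReal.le_inv_iff_mul_le.2 h2
    refine h3.trans ?_
    rw [ENNReal.mul_inv (Or.inl (by simp [Real.exp_pos])) (Or.inl ENNReal.ofReal_ne_top),
      inv_inv]
    rw [← ENNReal.ofReal_inv_of_pos (Real.exp_pos _), ← Real.exp_neg]
    rw [hCdef, ← ENNReal.ofReal_mul (Real.exp_pos _).le, ← Real.exp_add]
    apply ENNReal.ofReal_le_ofReal
    apply Real.exp_le_exp.2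
    rw [neg_mul]
  -- the union is covered by the disjoint first-entry events
  have hcover : (⋃ k ∈ Finset.range N, {ω | u < ∑ i ∈ Finset.range (k+1), X i ω})
      ⊆ ⋃ k ∈ Finset.range N, A k := by
    intro ω hω
    simp only [Set.mem_iUnion, Finset.mem_range, Set.mem_setOf_eq] at hω
    obtain ⟨k, hkN, hk⟩ := hω
    have hex : ∃ j, u < ∑ i ∈ Finset.range (j+1), X i ω := ⟨k, hk⟩
    set k₀ := Nat.find hex with hk₀def
    have hk₀ : u < ∑ i ∈ Finset.range (k₀+1), X i ω := Nat.find_spec hex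
    have hk₀le : k₀ ≤ k := Nat.find_min' hex hk
    simp only [Set.mem_iUnion, Finset.mem_range, Set.mem_setOf_eq]
    refine ⟨k₀, by omega, hk₀, fun j hj => ?_⟩
    exact not_lt.1 (Nat.find_min hex hj)
  calc P (⋃ k ∈ Finset.range (K+1), {ω | u < ∑ i ∈ Finset.range (k+1), X i ω})
      ≤ P (⋃ k ∈ Finset.range N, A k) := measure_mono hcover
    _ ≤ ∑ k ∈ Finset.range N, P (A k) := measure_biUnion_finset_le _ _
    _ ≤ ENNReal.ofReal (Real.exp (-h * u + h * Real.exp h)) := hsum_bound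

end Main

/-- Example 4: two-valued non-homogeneous model.
Random variables are 1-indexed (index `0` unused): for `n ≥ 1`, `Y n` takes the
value `1` with probability `1/(n+1)` and the value `−1` with probability `n/(n+1)`,
the `Y n` being mutually independent; `S k = Y_1 + ⋯ + Y_k = ∑_{j=1}^{k} Y j`.
Then (a) for all `h > 0` and `u > 0`,
`P[sup_{k≥1} S_k > u] ≤ exp(−h u + h e^h)`, and
(b) for every `u > 2`, `P[sup_{k≥1} S_k > u] ≤ (2/u)^{u/2}`. -/
theorem stmt19 {Ω : Type*} [MeasurableSpace Ω] (P : Measure Ω) [IsProbabilityMeasure P]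
    (Y : ℕ → Ω → ℝ)
    (hmeas : ∀ i, Measurable (Y i))
    (hindep : iIndepFun (fun k : ℕ => Y (k + 1)) P)
    (hone : ∀ n : ℕ, 1 ≤ n → P {ω | Y n ω = 1} = ((n : ℝ≥0∞) + 1)⁻¹)
    (hmone : ∀ n : ℕ, 1 ≤ n → P {ω | Y n ω = -1} = (n : ℝ≥0∞) / ((n : ℝ≥0∞) + 1))
    (hvals : ∀ n : ℕ, 1 ≤ n → ∀ ω, Y n ω = 1 ∨ Y n ω = -1)
    (S : ℕ → Ω → ℝ) (hS : ∀ k ω, S k ω = ∑ j ∈ Finset.Icc 1 k, Y j ω) :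
    (∀ h u : ℝ, 0 < h → 0 < u →
      P (⋃ k : ℕ, {ω | u < S (k + 1) ω}) ≤
        ENNReal.ofReal (Real.exp (-h * u + h * Real.exp h))) ∧
    ∀ u : ℝ, 2 < u →
      P (⋃ k : ℕ, {ω | u < S (k + 1) ω}) ≤
        ENNReal.ofReal ((2 / u) ^ (u / 2)) := by
  set X : ℕ → Ω → ℝ := fun i => Y (i+1) with hX
  have hmX : ∀ i, Measurable (X i) := fun i => hmeas (i+1)
  have hindepX : iIndepFun X P := hindep
  have hSX : ∀ k ω, S k ω = ∑ i ∈ Finset.range k, X i ω := by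
    intro k ω
    rw [hS]
    induction k with
    | zero => simp
    | succ k ih =>
      rw [Finset.sum_Icc_succ_top (by omega : 1 ≤ k+1), ih, Finset.sum_range_succ]
  have hcast : ∀ i : ℕ, ((i+1:ℕ) : ℝ≥0∞) + 1 = ENNReal.ofReal ((i:ℝ)+2) := by
    intro i
    have h1 : ((i+1:ℕ) : ℝ≥0∞) + 1 = ((i+2:ℕ) : ℝ≥0∞) := by push_cast; ring
    rw [h1, ← ENNReal.ofReal_natCast (i+2)]
    congr 1
    push_cast
    ring
  have hcast2 : ∀ i : ℕ, ((i+1:ℕ) : ℝ≥0∞) = ENNReal.ofReal ((i:ℝ)+1) := by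
    intro i
    rw [← ENNReal.ofReal_natCast (i+1)]
    congr 1
    push_cast
    ring
  have honeX : ∀ i : ℕ, P {ω | X i ω = 1} = ENNReal.ofReal (((i:ℝ)+2)⁻¹) := by
    intro i
    have := hone (i+1) (by omega)
    rw [hX]
    simp only
    rw [this, hcast i, ← ENNReal.ofReal_inv_of_pos (by positivity)]
  have hmoneX : ∀ i : ℕ, P {ω | X i ω = -1} = ENNReal.ofReal (((i:ℝ)+1)/((i:ℝ)+2)) := by
    intro i
    have := hmone (i+1) (by omega)
    rw [hX]
    simp only
    rw [this, hcast i, hcast2 i, ← ENNReal.ofReal_div_of_pos (by positivity)]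
  have hvalsX : ∀ i ω, X i ω = 1 ∨ X i ω = -1 := fun i ω => hvals (i+1) (by omega) ω
  have parta : ∀ h u : ℝ, 0 < h → 0 < u →
      P (⋃ k : ℕ, {ω | u < S (k + 1) ω}) ≤
        ENNReal.ofReal (Real.exp (-h * u + h * Real.exp h)) := by
    intro h u hh hu
    rw [measure_iUnion_eq_iSup_accumulate]
    apply iSup_le
    intro K
    have hsub : Set.accumulate (fun k => {ω | u < S (k + 1) ω}) K ⊆
        ⋃ k ∈ Finset.range (K+1), {ω | u < ∑ i ∈ Finset.range (k+1), X i ω} := by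
      rw [Set.accumulate_def]
      intro ω hω
      simp only [Set.mem_iUnion, Set.mem_setOf_eq, Finset.mem_range] at hω ⊢
      obtain ⟨y, hy, hω⟩ := hω
      exact ⟨y, by omega, by rw [← hSX]; exact hω⟩
    exact (measure_mono hsub).trans
      (main_bound P X hmX hindepX honeX hmoneX hvalsX h u hh hu K)
  refine ⟨parta, fun u hu => ?_⟩
  set h : ℝ := Real.log (u/2) with hhdef
  have hh : 0 < h := Real.log_pos (by linarith)
  have hexp : Real.exp h = u/2 := Real.exp_log (by linarith)
  have hrpow : ((2/u : ℝ) ^ (u/2 : ℝ)) = Real.exp (-h * u + h * Real.exp h) := by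
    rw [Real.rpow_def_of_pos (by positivity)]
    congr 1
    have hlog : Real.log (2/u) = -h := by
      rw [hhdef, show (2/u : ℝ) = (u/2)⁻¹ from (inv_div u 2).symm, Real.log_inv]
    rw [hlog, hexp]
    ring
  rw [hrpow]
  exact parta h u hh (by linarith)
end
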